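/- arXiv:1909.07961 — 4 statements merged into one kernel-verified Lean document; each statement's English description precedes it below -/
import Mathlib

section
/- Let d ≥ 1, 0 ≤ S ≤ T ≤ 1, ε > 0 and C > 0. Let A : [S,T]_≤ → ℝ^d be continuous and suppose that |δA_{s,u,t}| ≤ C·|t−s|^{1+ε} for all S ≤ s ≤ u ≤ t ≤ T. Then there exists a unique function 𝒜 : [S,T] → ℝ^d with 𝒜_S = 0 such that for some constant K > 0 one has |𝒜_t − 𝒜_s − A_{s,t}| ≤ K·|t−s|^{1+ε} for all (s,t) ∈ [S,T]_≤. Moreover, there exists a constant K₀ depending only on ε and d such that this 𝒜 satisfies the above bound with K ≤ K₀·C. -/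
open Set

open Finset Filter Topology

namespace SewAux

noncomputable def pt (n : ℕ) (s t : ℝ) (i : ℕ) : ℝ := s + i * (t - s) / n

noncomputable def RS {E : Type*} [AddCommGroup E] (A : ℝ → ℝ → E) (n : ℕ) (s t : ℝ) : E :=
  ∑ i ∈ Finset.range n, A (pt n s t i) (pt n s t (i + 1))


lemma pt_zero (n : ℕ) (s t : ℝ) : pt n s t 0 = s := by simp [pt]

lemma pt_last {n : ℕ} (hn : n ≠ 0) (s t : ℝ) : pt n s t n = t := by
  have : (n : ℝ) ≠ 0 := Nat.cast_ne_zero.mpr hn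
  simp only [pt, mul_div_cancel_left₀ _ this]; ring

lemma pt_step {n : ℕ} (hn : n ≠ 0) {s t : ℝ} (hst : s ≤ t) (i : ℕ) :
    pt n s t i ≤ pt n s t (i + 1) := by
  have h1 : (0:ℝ) ≤ t - s := sub_nonneg.mpr hst
  simp only [pt]
  have h2 : (i : ℝ) * (t - s) / n ≤ ((i:ℝ) + 1) * (t - s) / n := by
    gcongr
    linarith
  push_cast
  linarith

lemma pt_succ_sub (n : ℕ) (s t : ℝ) (i : ℕ) :
    pt n s t (i + 1) - pt n s t i = (t - s) / n := by
  simp only [pt]; push_cast; ring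

lemma sew_mono {n : ℕ} {x : ℕ → ℝ} (hx : ∀ i < n, x i ≤ x (i + 1)) :
    ∀ i j, i ≤ j → j ≤ n → x i ≤ x j := by
  intro i j hij hjn
  induction j with
  | zero => exact le_of_eq (by rw [Nat.le_zero.mp hij])
  | succ j ih =>
    rcases Nat.eq_or_lt_of_le hij with h | h
    · exact le_of_eq (by rw [h])
    · exact le_trans (ih (Nat.lt_succ_iff.mp h) (le_trans (Nat.le_succ j) hjn))
        (hx j (by omega))

section
variable {E : Type*} [NormedAddCommGroup E]
variable {S T C ε : ℝ} {A : ℝ → ℝ → E}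

lemma A_diag (hε : 0 < ε)
    (hδ : ∀ s u t : ℝ, S ≤ s → s ≤ u → u ≤ t → t ≤ T →
      ‖A s t - A s u - A u t‖ ≤ C * (t - s) ^ (1 + ε))
    {s : ℝ} (h1 : S ≤ s) (h2 : s ≤ T) : A s s = 0 := by
  have h := hδ s s s h1 le_rfl le_rfl h2
  rw [sub_self s, Real.zero_rpow (by positivity : (0:ℝ) < 1 + ε).ne', mul_zero] at h
  have h2 : A s s - A s s - A s s = -A s s := by abel
  rw [h2, norm_neg] at h
  exact norm_le_zero_iff.mp h

lemma sew_removal (hε : 0 < ε) (hC : 0 ≤ C)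
    (hδ : ∀ s u t : ℝ, S ≤ s → s ≤ u → u ≤ t → t ≤ T →
      ‖A s t - A s u - A u t‖ ≤ C * (t - s) ^ (1 + ε)) :
    ∀ (n : ℕ) (x : ℕ → ℝ), (∀ i < n, x i ≤ x (i + 1)) → S ≤ x 0 → x n ≤ T →
      ‖(∑ i ∈ Finset.range n, A (x i) (x (i + 1))) - A (x 0) (x n)‖ ≤
        C * 2 ^ (1 + ε) * (∑ k ∈ Finset.range (n - 1), ((1:ℝ) / (k + 1)) ^ (1 + ε)) *
          (x n - x 0) ^ (1 + ε) := by
  intro n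
  induction n with
  | zero =>
    intro x hx h0 hn
    simp [A_diag hε hδ h0 hn]
  | succ n ih =>
    rcases Nat.eq_zero_or_pos n with rfl | hpos
    · intro x hx h0 hn
      simp
    obtain ⟨m, rfl⟩ : ∃ m, n = m + 1 := ⟨n - 1, by omega⟩
    intro x hx h0 hn
    have hmono : ∀ i j, i ≤ j → j ≤ m + 2 → x i ≤ x j := sew_mono hx
    set L : ℝ := x (m + 2) - x 0 with hLdef
    have hL : 0 ≤ L := sub_nonneg.mpr (hmono 0 (m + 2) (by omega) le_rfl)
    -- telescoping sums
    have h1 : ∑ j ∈ range (m + 1), (x (j + 2) - x (j + 1)) = x (m + 2) - x 1 := by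
      simpa using Finset.sum_range_sub (fun i => x (i + 1)) (m + 1)
    have h2 : ∑ j ∈ range (m + 1), (x (j + 1) - x j) = x (m + 1) - x 0 :=
      Finset.sum_range_sub x (m + 1)
    have htel : ∑ j ∈ range (m + 1), (x (j + 2) - x j)
        = (x (m + 2) - x 1) + (x (m + 1) - x 0) := by
      rw [← h1, ← h2, ← Finset.sum_add_distrib]
      exact Finset.sum_congr rfl fun i _ => by ring
    have hcast : ((m : ℝ) + 1) ≠ 0 := by positivity
    have hsum_le : ∑ j ∈ range (m + 1), (x (j + 2) - x j)
        ≤ ∑ _j ∈ range (m + 1), 2 * L / (m + 1) := by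
      rw [htel, Finset.sum_const, Finset.card_range, nsmul_eq_mul]
      have hx1 : x 0 ≤ x 1 := hmono 0 1 (by omega) (by omega)
      have hxm : x (m + 1) ≤ x (m + 2) := hmono (m + 1) (m + 2) (by omega) le_rfl
      have : ((m + 1 : ℕ) : ℝ) * (2 * L / ((m:ℝ) + 1)) = 2 * L := by
        push_cast; field_simp
      push_cast
      rw [show ((m : ℝ) + 1) * (2 * L / ((m:ℝ) + 1)) = 2 * L by field_simp]
      simp only [hLdef]; linarith
    obtain ⟨j, hj_mem, hj⟩ :=
      Finset.exists_le_of_sum_le ⟨0, by simp⟩ hsum_le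
    have hjm : j ≤ m := Nat.lt_succ_iff.mp (Finset.mem_range.mp hj_mem)
    set y : ℕ → ℝ := fun i => if i ≤ j then x i else x (i + 1) with hy
    have hy0 : y 0 = x 0 := if_pos (Nat.zero_le j)
    have hyn : y (m + 1) = x (m + 2) := if_neg (by omega)
    have hymono : ∀ i < m + 1, y i ≤ y (i + 1) := by
      intro i hi
      by_cases hc1 : i + 1 ≤ j
      · rw [hy]; simp only
        rw [if_pos (by omega : i ≤ j), if_pos hc1]
        exact hx i (by omega)
      · by_cases hc2 : i ≤ j
        · rw [hy]; simp only
          rw [if_pos hc2, if_neg hc1]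
          have : i = j := by omega
          subst this
          exact hmono i (i + 2) (by omega) (by omega)
        · rw [hy]; simp only
          rw [if_neg hc2, if_neg hc1]
          exact hx (i + 1) (by omega)
    -- the sum identity
    have key : ∑ i ∈ range (m + 2), A (x i) (x (i + 1))
        = (∑ i ∈ range (m + 1), A (y i) (y (i + 1)))
          + (A (x j) (x (j + 1)) + A (x (j + 1)) (x (j + 2)) - A (x j) (x (j + 2))) := by
      have split1 : ∑ i ∈ range (m + 2), A (x i) (x (i + 1))
          = (∑ i ∈ range j, A (x i) (x (i + 1))) + A (x j) (x (j + 1))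
            + A (x (j + 1)) (x (j + 2))
            + ∑ i ∈ Ico (j + 2) (m + 2), A (x i) (x (i + 1)) := by
        rw [Finset.range_eq_Ico,
          ← Finset.sum_Ico_consecutive _ (Nat.zero_le (j + 2)) (by omega : j + 2 ≤ m + 2),
          Finset.sum_Ico_succ_top (by omega : 0 ≤ j + 1),
          Finset.sum_Ico_succ_top (by omega : 0 ≤ j), ← Finset.range_eq_Ico]
      have split2 : ∑ i ∈ range (m + 1), A (y i) (y (i + 1))
          = (∑ i ∈ range j, A (x i) (x (i + 1))) + A (x j) (x (j + 2))
            + ∑ i ∈ Ico (j + 1) (m + 1), A (x (i + 1)) (x (i + 2)) := by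
        rw [Finset.range_eq_Ico,
          ← Finset.sum_Ico_consecutive _ (Nat.zero_le (j + 1)) (by omega : j + 1 ≤ m + 1),
          Finset.sum_Ico_succ_top (by omega : 0 ≤ j), ← Finset.range_eq_Ico]
        congr 1
        · congr 1
          · apply Finset.sum_congr rfl
            intro i hi
            have hij : i < j := Finset.mem_range.mp hi
            rw [hy]; simp only
            rw [if_pos (by omega : i ≤ j), if_pos (by omega : i + 1 ≤ j)]
          · rw [hy]; simp only
            rw [if_pos le_rfl, if_neg (by omega)]
        · apply Finset.sum_congr rfl
          intro i hi
          have hij : j + 1 ≤ i := (Finset.mem_Ico.mp hi).1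
          rw [hy]; simp only
          rw [if_neg (by omega), if_neg (by omega)]
      have shift : ∑ i ∈ Ico (j + 2) (m + 2), A (x i) (x (i + 1))
          = ∑ i ∈ Ico (j + 1) (m + 1), A (x (i + 1)) (x (i + 2)) := by
        rw [Finset.sum_Ico_eq_sum_range, Finset.sum_Ico_eq_sum_range]
        have : m + 2 - (j + 2) = m + 1 - (j + 1) := by omega
        rw [this]
        apply Finset.sum_congr rfl
        intro i _
        rw [show j + 2 + i = j + 1 + i + 1 from by omega]
      rw [split1, split2, shift]
      abel
    -- the estimate
    have hδbound : ‖A (x j) (x (j + 1)) + A (x (j + 1)) (x (j + 2)) - A (x j) (x (j + 2))‖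
        ≤ C * (2 * L / ((m:ℝ) + 1)) ^ (1 + ε) := by
      have hb : ‖A (x j) (x (j + 2)) - A (x j) (x (j + 1)) - A (x (j + 1)) (x (j + 2))‖
          ≤ C * (x (j + 2) - x j) ^ (1 + ε) :=
        hδ _ _ _ (le_trans h0 (hmono 0 j (by omega) (by omega)))
          (hx j (by omega)) (hx (j + 1) (by omega))
          (le_trans (hmono (j + 2) (m + 2) (by omega) le_rfl) hn)
      have heq : A (x j) (x (j + 1)) + A (x (j + 1)) (x (j + 2)) - A (x j) (x (j + 2))
          = -(A (x j) (x (j + 2)) - A (x j) (x (j + 1)) - A (x (j + 1)) (x (j + 2))) := by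
        abel
      rw [heq, norm_neg]
      refine le_trans hb (mul_le_mul_of_nonneg_left ?_ hC)
      apply Real.rpow_le_rpow (sub_nonneg.mpr (hmono j (j + 2) (by omega) (by omega)))
      · convert hj using 2 <;> push_cast <;> ring
      · positivity
    have hIH := ih y hymono (by rw [hy0]; exact h0) (by rw [hyn]; exact hn)
    rw [hy0, hyn] at hIH
    have hrw : (∑ i ∈ range (m + 2), A (x i) (x (i + 1))) - A (x 0) (x (m + 2))
        = ((∑ i ∈ range (m + 1), A (y i) (y (i + 1))) - A (x 0) (x (m + 2)))
          + (A (x j) (x (j + 1)) + A (x (j + 1)) (x (j + 2)) - A (x j) (x (j + 2))) := by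
      rw [key]; abel
    rw [hrw]
    refine le_trans (norm_add_le _ _) ?_
    have hpow : (2 * L / ((m:ℝ) + 1)) ^ (1 + ε)
        = 2 ^ (1 + ε) * ((1:ℝ) / ((m:ℝ) + 1)) ^ (1 + ε) * L ^ (1 + ε) := by
      rw [show 2 * L / ((m:ℝ) + 1) = (2 * (1 / ((m:ℝ) + 1))) * L by ring,
        Real.mul_rpow (by positivity) hL, Real.mul_rpow (by positivity) (by positivity)]
    have hsum_succ : ∑ k ∈ Finset.range (m + 2 - 1), ((1:ℝ) / (k + 1)) ^ (1 + ε)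
        = (∑ k ∈ Finset.range m, ((1:ℝ) / (k + 1)) ^ (1 + ε))
          + ((1:ℝ) / ((m:ℝ) + 1)) ^ (1 + ε) := by
      rw [show m + 2 - 1 = m + 1 by omega, Finset.sum_range_succ]
    have hsimp : m + 1 - 1 = m := by omega
    rw [hsimp] at hIH
    rw [hsum_succ]
    calc ‖(∑ i ∈ range (m + 1), A (y i) (y (i + 1))) - A (x 0) (x (m + 2))‖
          + ‖A (x j) (x (j + 1)) + A (x (j + 1)) (x (j + 2)) - A (x j) (x (j + 2))‖
        ≤ C * 2 ^ (1 + ε) * (∑ k ∈ Finset.range m, ((1:ℝ) / (k + 1)) ^ (1 + ε)) * L ^ (1 + ε)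
          + C * (2 * L / ((m:ℝ) + 1)) ^ (1 + ε) := by
          apply add_le_add _ hδbound
          exact hIH
      _ = C * 2 ^ (1 + ε)
            * ((∑ k ∈ Finset.range m, ((1:ℝ) / (k + 1)) ^ (1 + ε))
              + ((1:ℝ) / ((m:ℝ) + 1)) ^ (1 + ε)) * L ^ (1 + ε) := by
          rw [hpow]; ring
      _ = _ := by rw [hLdef]

noncomputable def Zc (ε : ℝ) : ℝ := ∑' k : ℕ, ((1:ℝ) / (k + 1)) ^ (1 + ε)

lemma Zc_summable {ε : ℝ} (hε : 0 < ε) :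
    Summable (fun k : ℕ => ((1:ℝ) / (k + 1)) ^ (1 + ε)) := by
  have h := Real.summable_one_div_nat_rpow.mpr (by linarith : (1:ℝ) < 1 + ε)
  have h2 := (summable_nat_add_iff 1).mpr h
  refine h2.congr fun n => ?_
  push_cast
  rw [Real.div_rpow (by norm_num) (by positivity), Real.one_rpow]

lemma sum_le_Zc {ε : ℝ} (hε : 0 < ε) (n : ℕ) :
    ∑ k ∈ Finset.range n, ((1:ℝ) / (k + 1)) ^ (1 + ε) ≤ Zc ε :=
  Summable.sum_le_tsum (Finset.range n) (fun i _ => by positivity) (Zc_summable hε)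

lemma Zc_pos {ε : ℝ} (hε : 0 < ε) : 0 < Zc ε := by
  have h := Summable.le_tsum (Zc_summable hε) 0 (fun j _ => by positivity)
  exact lt_of_lt_of_le (by positivity) h

section part3
variable {E : Type*} [NormedAddCommGroup E]
variable {S T C ε : ℝ} {A : ℝ → ℝ → E}

lemma pt_ge {n : ℕ} {s t : ℝ} (hst : s ≤ t) (i : ℕ) : s ≤ pt n s t i := by
  have h1 : (0:ℝ) ≤ t - s := sub_nonneg.mpr hst
  have : (0:ℝ) ≤ (i:ℝ) * (t - s) / n := by positivity
  simp only [pt]; linarith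

lemma pt_le {n : ℕ} (hn : n ≠ 0) {s t : ℝ} (hst : s ≤ t) {i : ℕ} (hi : i ≤ n) :
    pt n s t i ≤ t := by
  have := sew_mono (x := fun i => pt n s t i) (n := n) (fun i _ => pt_step hn hst i) i n hi le_rfl
  simpa only [pt_last hn] using this

lemma RS_sub_A (hε : 0 < ε) (hC : 0 ≤ C)
    (hδ : ∀ s u t : ℝ, S ≤ s → s ≤ u → u ≤ t → t ≤ T →
      ‖A s t - A s u - A u t‖ ≤ C * (t - s) ^ (1 + ε))
    {n : ℕ} (hn : n ≠ 0) {a b : ℝ} (hSa : S ≤ a) (hab : a ≤ b) (hbT : b ≤ T) :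
    ‖RS A n a b - A a b‖ ≤ C * (2 ^ (1 + ε) * Zc ε) * (b - a) ^ (1 + ε) := by
  have h := sew_removal hε hC hδ n (pt n a b) (fun i _ => pt_step hn hab i)
    (by rw [pt_zero]; exact hSa) (by rw [pt_last hn]; exact hbT)
  rw [pt_zero, pt_last hn] at h
  refine h.trans (mul_le_mul_of_nonneg_right ?_ (Real.rpow_nonneg (sub_nonneg.mpr hab) _))
  calc C * 2 ^ (1 + ε) * (∑ k ∈ Finset.range (n-1), ((1:ℝ) / (k + 1)) ^ (1 + ε))
      ≤ C * 2 ^ (1 + ε) * Zc ε := by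
        apply mul_le_mul_of_nonneg_left (sum_le_Zc hε _) (by positivity)
    _ = C * (2 ^ (1 + ε) * Zc ε) := by ring

lemma sum_range_mul_eq {β : Type*} [AddCommMonoid β] (f : ℕ → β) (n m : ℕ) :
    ∑ k ∈ Finset.range (n * m), f k = ∑ i ∈ Finset.range n, ∑ j ∈ Finset.range m, f (i * m + j) := by
  induction n with
  | zero => simp
  | succ n ih =>
    rw [Finset.sum_range_succ, ← ih, show (n + 1) * m = n * m + m from by ring,
      Finset.range_eq_Ico,
      ← Finset.sum_Ico_consecutive f (Nat.zero_le (n * m)) (Nat.le_add_right _ m),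
      ← Finset.range_eq_Ico]
    congr 1
    rw [Finset.sum_Ico_eq_sum_range, Nat.add_sub_cancel_left]

lemma pt_mul {n m : ℕ} (hn : n ≠ 0) (hm : m ≠ 0) (s t : ℝ) (i j : ℕ) :
    pt (n * m) s t (i * m + j) = pt m (pt n s t i) (pt n s t (i + 1)) j := by
  have hn' : ((n:ℝ)) ≠ 0 := Nat.cast_ne_zero.mpr hn
  have hm' : ((m:ℝ)) ≠ 0 := Nat.cast_ne_zero.mpr hm
  simp only [pt]
  push_cast
  field_simp
  ring

lemma RS_mul {n m : ℕ} (hn : n ≠ 0) (hm : m ≠ 0) (s t : ℝ) :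
    RS A (n * m) s t = ∑ i ∈ Finset.range n, RS A m (pt n s t i) (pt n s t (i + 1)) := by
  rw [RS, sum_range_mul_eq _ n m]
  refine Finset.sum_congr rfl fun i _ => ?_
  rw [RS]
  refine Finset.sum_congr rfl fun j _ => ?_
  rw [show i * m + j + 1 = i * m + (j + 1) from rfl, pt_mul hn hm, pt_mul hn hm]

lemma RS_refine (hε : 0 < ε) (hC : 0 ≤ C)
    (hδ : ∀ s u t : ℝ, S ≤ s → s ≤ u → u ≤ t → t ≤ T →
      ‖A s t - A s u - A u t‖ ≤ C * (t - s) ^ (1 + ε))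
    {n m : ℕ} (hn : n ≠ 0) (hm : m ≠ 0) {s t : ℝ} (hSs : S ≤ s) (hst : s ≤ t) (htT : t ≤ T) :
    ‖RS A (n * m) s t - RS A n s t‖
      ≤ C * (2 ^ (1 + ε) * Zc ε) * ((1:ℝ) / n) ^ ε * (t - s) ^ (1 + ε) := by
  have hnpos : 0 < n := Nat.pos_of_ne_zero hn
  have hn' : (0:ℝ) < (n:ℝ) := by exact_mod_cast hnpos
  rw [RS_mul hn hm]
  have hRSn : RS A n s t = ∑ i ∈ Finset.range n, A (pt n s t i) (pt n s t (i + 1)) := rfl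
  rw [hRSn, ← Finset.sum_sub_distrib]
  refine (norm_sum_le _ _).trans ?_
  have hterm : ∀ i ∈ Finset.range n,
      ‖RS A m (pt n s t i) (pt n s t (i + 1)) - A (pt n s t i) (pt n s t (i + 1))‖
        ≤ C * (2 ^ (1 + ε) * Zc ε) * ((t - s) / n) ^ (1 + ε) := by
    intro i hi
    have hi' : i + 1 ≤ n := Finset.mem_range.mp hi
    have h := RS_sub_A hε hC hδ hm
      (le_trans hSs (pt_ge hst i)) (pt_step hn hst i)
      (le_trans (pt_le hn hst hi') htT)
    rwa [pt_succ_sub] at h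
  refine (Finset.sum_le_sum hterm).trans ?_
  rw [Finset.sum_const, Finset.card_range, nsmul_eq_mul]
  have e1 : ((t - s) / (n:ℝ)) ^ (1 + ε) = (t - s) ^ (1 + ε) * ((1:ℝ) / n) ^ (1 + ε) := by
    rw [show (t - s) / (n:ℝ) = (t - s) * (1 / (n:ℝ)) from by ring,
      Real.mul_rpow (sub_nonneg.mpr hst) (by positivity)]
  have e2 : ((1:ℝ) / n) ^ (1 + ε) = (1 / (n:ℝ)) * ((1:ℝ) / n) ^ ε := by
    rw [Real.rpow_add (by positivity) 1 ε, Real.rpow_one]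
  rw [e1, e2]
  rw [show (n:ℝ) * (C * (2 ^ (1 + ε) * Zc ε) * ((t - s) ^ (1 + ε) * (1 / (n:ℝ) * ((1:ℝ)/n) ^ ε)))
      = C * (2 ^ (1 + ε) * Zc ε) * ((1:ℝ)/n) ^ ε * (t - s) ^ (1 + ε) * ((n:ℝ) * (1/(n:ℝ))) from by ring]
  rw [mul_one_div_cancel (ne_of_gt hn'), mul_one]

end part3

end

section part4
variable {E : Type*} [NormedAddCommGroup E] [CompleteSpace E]
variable {S T C ε : ℝ} {A : ℝ → ℝ → E}

lemma inv_pow_tendsto (hε : 0 < ε) :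
    Filter.Tendsto (fun N : ℕ => ((1:ℝ) / (N + 1)) ^ ε) atTop (𝓝 0) := by
  have h1 : Filter.Tendsto (fun N : ℕ => (1:ℝ) / (N + 1)) atTop (𝓝 0) :=
    tendsto_one_div_add_atTop_nhds_zero_nat
  have hc : ContinuousAt (fun x : ℝ => x ^ ε) 0 :=
    Real.continuousAt_rpow_const 0 ε (Or.inr hε.le)
  have h2 := hc.tendsto.comp h1
  simpa [Function.comp_def, Real.zero_rpow hε.ne'] using h2

lemma RS_dist (hε : 0 < ε) (hC : 0 ≤ C)
    (hδ : ∀ s u t : ℝ, S ≤ s → s ≤ u → u ≤ t → t ≤ T →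
      ‖A s t - A s u - A u t‖ ≤ C * (t - s) ^ (1 + ε))
    {s t : ℝ} (hSs : S ≤ s) (hst : s ≤ t) (htT : t ≤ T) (hts1 : t - s ≤ 1) :
    ∀ a b N : ℕ, N ≤ a → N ≤ b →
      dist (RS A (a + 1) s t) (RS A (b + 1) s t)
        ≤ 2 * (C * (2 ^ (1 + ε) * Zc ε)) * ((1:ℝ) / (N + 1)) ^ ε := by
  have key : ∀ a N : ℕ, N ≤ a → ∀ b : ℕ,
      dist (RS A (a + 1) s t) (RS A ((a + 1) * (b + 1)) s t)
        ≤ C * (2 ^ (1 + ε) * Zc ε) * ((1:ℝ) / (N + 1)) ^ ε := by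
    intro a N hN b
    rw [dist_eq_norm']
    have h := RS_refine hε hC hδ (Nat.succ_ne_zero a) (Nat.succ_ne_zero b) hSs hst htT
    refine h.trans ?_
    have h1 : ((1:ℝ) / ((a:ℝ) + 1 + 0)) ^ ε ≤ ((1:ℝ) / (N + 1)) ^ ε := by
      apply Real.rpow_le_rpow (by positivity) ?_ hε.le
      apply one_div_le_one_div_of_le (by positivity)
      have : (N:ℝ) ≤ a := Nat.cast_le.mpr hN
      linarith
    have h2 : (t - s) ^ (1 + ε) ≤ 1 :=
      Real.rpow_le_one (sub_nonneg.mpr hst) hts1 (by positivity)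
    calc C * (2 ^ (1 + ε) * Zc ε) * ((1:ℝ) / ((a+1:ℕ))) ^ ε * (t - s) ^ (1 + ε)
        ≤ C * (2 ^ (1 + ε) * Zc ε) * ((1:ℝ) / ((N:ℝ) + 1)) ^ ε * 1 := by
          have h1' : ((1:ℝ) / ((a+1:ℕ):ℝ)) ^ ε ≤ ((1:ℝ) / ((N:ℝ) + 1)) ^ ε := by
            push_cast
            simpa using h1
          have hz : (0:ℝ) ≤ C * (2 ^ (1 + ε) * Zc ε) := by
            have := Zc_pos hε
            positivity
          have hr : (0:ℝ) ≤ (t - s) ^ (1 + ε) := Real.rpow_nonneg (sub_nonneg.mpr hst) _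
          have hq : (0:ℝ) ≤ ((1:ℝ) / ((N:ℝ) + 1)) ^ ε := by positivity
          nlinarith [mul_le_mul_of_nonneg_left h1' hz,
            mul_le_mul_of_nonneg_left h2 (mul_nonneg hz hq)]
      _ = C * (2 ^ (1 + ε) * Zc ε) * ((1:ℝ) / ((N:ℝ) + 1)) ^ ε := by rw [mul_one]
  intro a b N hNa hNb
  have t1 := key a N hNa b
  have t2 := key b N hNb a
  rw [mul_comm (b + 1) (a + 1)] at t2
  calc dist (RS A (a + 1) s t) (RS A (b + 1) s t)
      ≤ dist (RS A (a + 1) s t) (RS A ((a + 1) * (b + 1)) s t)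
        + dist (RS A (b + 1) s t) (RS A ((a + 1) * (b + 1)) s t) := dist_triangle_right _ _ _
    _ ≤ _ := by linarith

lemma RS_cauchySeq (hε : 0 < ε) (hC : 0 ≤ C)
    (hδ : ∀ s u t : ℝ, S ≤ s → s ≤ u → u ≤ t → t ≤ T →
      ‖A s t - A s u - A u t‖ ≤ C * (t - s) ^ (1 + ε))
    {s t : ℝ} (hSs : S ≤ s) (hst : s ≤ t) (htT : t ≤ T) (hts1 : t - s ≤ 1) :
    CauchySeq (fun k => RS A (k + 1) s t) := by
  apply cauchySeq_of_le_tendsto_0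
    (fun N : ℕ => 2 * (C * (2 ^ (1 + ε) * Zc ε)) * ((1:ℝ) / ((N:ℝ) + 1)) ^ ε)
    (fun n m N hn hm => RS_dist hε hC hδ hSs hst htT hts1 n m N hn hm)
  have := (inv_pow_tendsto hε).const_mul (2 * (C * (2 ^ (1 + ε) * Zc ε)))
  simpa using this

noncomputable def Phi (A : ℝ → ℝ → E) (s t : ℝ) : E :=
  haveI : Nonempty E := ⟨0⟩
  limUnder atTop (fun k => RS A (k + 1) s t)

lemma Phi_tendsto (hε : 0 < ε) (hC : 0 ≤ C)
    (hδ : ∀ s u t : ℝ, S ≤ s → s ≤ u → u ≤ t → t ≤ T →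
      ‖A s t - A s u - A u t‖ ≤ C * (t - s) ^ (1 + ε))
    {s t : ℝ} (hSs : S ≤ s) (hst : s ≤ t) (htT : t ≤ T) (hts1 : t - s ≤ 1) :
    Filter.Tendsto (fun k => RS A (k + 1) s t) atTop (𝓝 (Phi A s t)) := by
  haveI : Nonempty E := ⟨0⟩
  exact (RS_cauchySeq hε hC hδ hSs hst htT hts1).tendsto_limUnder

lemma Phi_sub_A (hε : 0 < ε) (hC : 0 ≤ C)
    (hδ : ∀ s u t : ℝ, S ≤ s → s ≤ u → u ≤ t → t ≤ T →
      ‖A s t - A s u - A u t‖ ≤ C * (t - s) ^ (1 + ε))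
    {s t : ℝ} (hSs : S ≤ s) (hst : s ≤ t) (htT : t ≤ T) (hts1 : t - s ≤ 1) :
    ‖Phi A s t - A s t‖ ≤ C * (2 ^ (1 + ε) * Zc ε) * (t - s) ^ (1 + ε) := by
  have h := Phi_tendsto hε hC hδ hSs hst htT hts1
  have hnorm : Filter.Tendsto (fun k => ‖RS A (k + 1) s t - A s t‖) atTop
      (𝓝 ‖Phi A s t - A s t‖) := (h.sub tendsto_const_nhds).norm
  exact le_of_tendsto hnorm (Filter.Eventually.of_forall fun k =>
    RS_sub_A hε hC hδ (Nat.succ_ne_zero k) hSs hst htT)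

lemma Phi_tendsto_mul (hε : 0 < ε) (hC : 0 ≤ C)
    (hδ : ∀ s u t : ℝ, S ≤ s → s ≤ u → u ≤ t → t ≤ T →
      ‖A s t - A s u - A u t‖ ≤ C * (t - s) ^ (1 + ε))
    {s t : ℝ} (hSs : S ≤ s) (hst : s ≤ t) (htT : t ≤ T) (hts1 : t - s ≤ 1)
    {q : ℕ} (hq : q ≠ 0) :
    Filter.Tendsto (fun m : ℕ => RS A (q * (m + 1)) s t) atTop (𝓝 (Phi A s t)) := by
  have hidx : Filter.Tendsto (fun m : ℕ => q * (m + 1) - 1) atTop atTop := by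
    apply tendsto_atTop_mono (f := fun m : ℕ => m) (fun m => ?_) tendsto_id
    show m ≤ q * (m + 1) - 1
    have h1 : 1 * (m + 1) ≤ q * (m + 1) := Nat.mul_le_mul_right _ (Nat.one_le_iff_ne_zero.mpr hq)
    omega
  have h := (Phi_tendsto hε hC hδ hSs hst htT hts1).comp hidx
  refine h.congr fun m => ?_
  simp only [Function.comp]
  congr 1
  have h1 : 1 * (m + 1) ≤ q * (m + 1) := Nat.mul_le_mul_right _ (Nat.one_le_iff_ne_zero.mpr hq)
  omega

lemma Phi_diag (hε : 0 < ε) (hC : 0 ≤ C)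
    (hδ : ∀ s u t : ℝ, S ≤ s → s ≤ u → u ≤ t → t ≤ T →
      ‖A s t - A s u - A u t‖ ≤ C * (t - s) ^ (1 + ε))
    {s : ℝ} (hSs : S ≤ s) (hsT : s ≤ T) : Phi A s s = 0 := by
  have h0 : ∀ k : ℕ, RS A (k + 1) s s = 0 := by
    intro k
    rw [RS]
    apply Finset.sum_eq_zero
    intro i _
    rw [show pt (k+1) s s i = s from by simp [pt],
      show pt (k+1) s s (i+1) = s from by simp [pt]]
    exact A_diag hε hδ hSs hsT
  have h := Phi_tendsto hε hC hδ hSs le_rfl hsT (by linarith)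
  have h2 : Filter.Tendsto (fun _ : ℕ => (0:E)) atTop (𝓝 (Phi A s s)) := by
    simpa [h0] using h
  exact (tendsto_nhds_unique h2 tendsto_const_nhds)

end part4

section part5
variable {E : Type*} [NormedAddCommGroup E] [CompleteSpace E]
variable {S T C ε : ℝ} {A : ℝ → ℝ → E}

lemma Phi_sub_RS (hε : 0 < ε) (hC : 0 ≤ C)
    (hδ : ∀ s u t : ℝ, S ≤ s → s ≤ u → u ≤ t → t ≤ T →
      ‖A s t - A s u - A u t‖ ≤ C * (t - s) ^ (1 + ε))
    {s t : ℝ} (hSs : S ≤ s) (hst : s ≤ t) (htT : t ≤ T) (hts1 : t - s ≤ 1) (n : ℕ) :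
    ‖Phi A s t - RS A (n + 1) s t‖
      ≤ C * (2 ^ (1 + ε) * Zc ε) * ((1:ℝ) / ((n:ℝ) + 1)) ^ ε * (t - s) ^ (1 + ε) := by
  have hm := Phi_tendsto_mul hε hC hδ hSs hst htT hts1 (Nat.succ_ne_zero n)
  have hnorm : Filter.Tendsto (fun m => ‖RS A ((n + 1) * (m + 1)) s t - RS A (n + 1) s t‖)
      atTop (𝓝 ‖Phi A s t - RS A (n + 1) s t‖) := (hm.sub tendsto_const_nhds).norm
  refine le_of_tendsto hnorm (Filter.Eventually.of_forall fun m => ?_)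
  have h := RS_refine hε hC hδ (Nat.succ_ne_zero n) (Nat.succ_ne_zero m) hSs hst htT
  push_cast at h ⊢
  exact h

lemma RS_continuousOn
    (hA : ContinuousOn (fun q : ℝ × ℝ => A q.1 q.2) {q : ℝ × ℝ | S ≤ q.1 ∧ q.1 ≤ q.2 ∧ q.2 ≤ T})
    {n : ℕ} (hn : n ≠ 0) :
    ContinuousOn (fun q : ℝ × ℝ => RS A n q.1 q.2) {q : ℝ × ℝ | S ≤ q.1 ∧ q.1 ≤ q.2 ∧ q.2 ≤ T} := by
  apply continuousOn_finset_sum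
  intro i hi
  have hcont : Continuous (fun q : ℝ × ℝ => (pt n q.1 q.2 i, pt n q.1 q.2 (i + 1))) := by
    simp only [pt]
    fun_prop
  refine hA.comp hcont.continuousOn ?_
  intro q hq
  obtain ⟨h1, h2, h3⟩ := hq
  exact ⟨le_trans h1 (pt_ge h2 i), pt_step hn h2 i,
    le_trans (pt_le hn h2 (Finset.mem_range.mp hi)) h3⟩

lemma Phi_continuousOn (hε : 0 < ε) (hC : 0 ≤ C)
    (hδ : ∀ s u t : ℝ, S ≤ s → s ≤ u → u ≤ t → t ≤ T →
      ‖A s t - A s u - A u t‖ ≤ C * (t - s) ^ (1 + ε))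
    (hA : ContinuousOn (fun q : ℝ × ℝ => A q.1 q.2) {q : ℝ × ℝ | S ≤ q.1 ∧ q.1 ≤ q.2 ∧ q.2 ≤ T})
    (hS0 : 0 ≤ S) (hT1 : T ≤ 1) :
    ContinuousOn (fun q : ℝ × ℝ => Phi A q.1 q.2)
      {q : ℝ × ℝ | S ≤ q.1 ∧ q.1 ≤ q.2 ∧ q.2 ≤ T} := by
  apply TendstoUniformlyOn.continuousOn
    (F := fun k (q : ℝ × ℝ) => RS A (k + 1) q.1 q.2) (p := atTop)
  · rw [Metric.tendstoUniformlyOn_iff]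
    intro d hd
    have hb : Filter.Tendsto (fun k : ℕ => C * (2 ^ (1 + ε) * Zc ε) * ((1:ℝ)/((k:ℝ)+1)) ^ ε)
        atTop (𝓝 0) := by
      simpa using (inv_pow_tendsto hε).const_mul (C * (2 ^ (1 + ε) * Zc ε))
    filter_upwards [hb.eventually_lt_const hd] with k hk
    intro q hq
    obtain ⟨h1, h2, h3⟩ := hq
    rw [dist_eq_norm]
    have hts1 : q.2 - q.1 ≤ 1 := by linarith
    have hb1 := Phi_sub_RS hε hC hδ h1 h2 h3 hts1 k
    have hb2 : (q.2 - q.1) ^ (1 + ε) ≤ 1 :=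
      Real.rpow_le_one (sub_nonneg.mpr h2) hts1 (by positivity)
    have hz : (0:ℝ) ≤ C * (2 ^ (1 + ε) * Zc ε) * ((1:ℝ)/((k:ℝ)+1)) ^ ε := by
      have := Zc_pos hε
      positivity
    nlinarith [mul_le_mul_of_nonneg_left hb2 hz]
  · exact (Filter.Eventually.of_forall fun k => RS_continuousOn hA (Nat.succ_ne_zero k)).frequently

lemma RS_split {p q m : ℕ} (hp : 1 ≤ p) (hpq : p ≤ q) (hm : m ≠ 0) (s t : ℝ) :
    RS A (q * m) s t
      = RS A (p * m) s (s + (p:ℝ) * (t - s) / q)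
        + RS A ((q - p) * m) (s + (p:ℝ) * (t - s) / q) t := by
  have hq0 : q ≠ 0 := by omega
  have hqR : ((q:ℝ)) ≠ 0 := Nat.cast_ne_zero.mpr hq0
  have hmR : ((m:ℝ)) ≠ 0 := Nat.cast_ne_zero.mpr hm
  have hpR : ((p:ℝ)) ≠ 0 := Nat.cast_ne_zero.mpr (by omega)
  set u := s + (p:ℝ) * (t - s) / q with hu
  have hqm : p * m + (q - p) * m = q * m := by
    rw [← Nat.add_mul]
    congr 1
    omega
  rw [RS, RS, RS, ← hqm, Finset.range_eq_Ico,
    ← Finset.sum_Ico_consecutive _ (Nat.zero_le (p * m)) (Nat.le_add_right _ _),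
    ← Finset.range_eq_Ico, Finset.sum_Ico_eq_sum_range, Nat.add_sub_cancel_left]
  congr 1
  · apply Finset.sum_congr rfl
    intro i _
    have e : ∀ k : ℕ, pt (p * m + (q - p) * m) s t k = pt (p * m) s u k := by
      intro k
      rw [hqm]
      simp only [pt, hu]
      push_cast
      field_simp
      ring
    rw [e i, e (i + 1)]
  · apply Finset.sum_congr rfl
    intro i hi
    have hi' : i < (q - p) * m := Finset.mem_range.mp hi
    have hqp : p < q := by
      rcases Nat.lt_or_ge p q with h | h
      · exact h
      · exfalso; have : q - p = 0 := by omega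
        rw [this, zero_mul] at hi'; omega
    have hqpR : ((q:ℝ) - (p:ℝ)) ≠ 0 := by
      have : (p:ℝ) < (q:ℝ) := Nat.cast_lt.mpr hqp
      linarith
    have e2 : ∀ k : ℕ, pt (p * m + (q - p) * m) s t (p * m + k) = pt ((q - p) * m) u t k := by
      intro k
      rw [hqm]
      simp only [pt, hu]
      push_cast [Nat.cast_sub hpq]
      field_simp
      ring
    rw [show p * m + i + 1 = p * m + (i + 1) from rfl] at *
    rw [e2 i, e2 (i + 1)]

end part5

section part6
variable {E : Type*} [NormedAddCommGroup E] [CompleteSpace E]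
variable {S T C ε : ℝ} {A : ℝ → ℝ → E}

lemma Phi_add_rat (hε : 0 < ε) (hC : 0 ≤ C)
    (hδ : ∀ s u t : ℝ, S ≤ s → s ≤ u → u ≤ t → t ≤ T →
      ‖A s t - A s u - A u t‖ ≤ C * (t - s) ^ (1 + ε))
    {s t : ℝ} (hSs : S ≤ s) (hst : s ≤ t) (htT : t ≤ T) (hts1 : t - s ≤ 1)
    {p q : ℕ} (hp1 : 1 ≤ p) (hpq : p ≤ q) :
    Phi A s t = Phi A s (s + (p:ℝ) * (t - s) / q) + Phi A (s + (p:ℝ) * (t - s) / q) t := by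
  have hq0 : q ≠ 0 := by omega
  have hqR : (0:ℝ) < (q:ℝ) := by exact_mod_cast Nat.pos_of_ne_zero hq0
  set u := s + (p:ℝ) * (t - s) / q with hu
  have hts : (0:ℝ) ≤ t - s := sub_nonneg.mpr hst
  have hsu : s ≤ u := by
    have : (0:ℝ) ≤ (p:ℝ) * (t - s) / q := by positivity
    simp only [hu]; linarith
  have hut : u ≤ t := by
    have hpq' : (p:ℝ) ≤ (q:ℝ) := Nat.cast_le.mpr hpq
    have h1 : (p:ℝ) * (t - s) / q ≤ (q:ℝ) * (t - s) / q := by gcongr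
    have h2 : (q:ℝ) * (t - s) / q = t - s := by field_simp
    simp only [hu]; linarith
  by_cases hpq' : p = q
  · subst hpq'
    have hut' : u = t := by
      simp only [hu]; field_simp; ring
    rw [hut', Phi_diag hε hC hδ (le_trans hSs hst) htT, add_zero]
  · have hplt : p < q := lt_of_le_of_ne hpq hpq'
    have hqp0 : q - p ≠ 0 := by omega
    have l1 : Filter.Tendsto (fun m : ℕ => RS A (q * (m + 1)) s t) atTop (𝓝 (Phi A s t)) :=
      Phi_tendsto_mul hε hC hδ hSs hst htT hts1 hq0
    have l2 : Filter.Tendsto (fun m : ℕ => RS A (p * (m + 1)) s u) atTop (𝓝 (Phi A s u)) :=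
      Phi_tendsto_mul hε hC hδ hSs hsu (le_trans hut htT) (by linarith) (by omega)
    have l3 : Filter.Tendsto (fun m : ℕ => RS A ((q - p) * (m + 1)) u t) atTop
        (𝓝 (Phi A u t)) :=
      Phi_tendsto_mul hε hC hδ (le_trans hSs hsu) hut htT (by linarith) hqp0
    have heq : ∀ m : ℕ, RS A (q * (m + 1)) s t
        = RS A (p * (m + 1)) s u + RS A ((q - p) * (m + 1)) u t := by
      intro m
      exact RS_split hp1 hpq (Nat.succ_ne_zero m) s t
    have l1' : Filter.Tendsto
        (fun m : ℕ => RS A (p * (m + 1)) s u + RS A ((q - p) * (m + 1)) u t)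
        atTop (𝓝 (Phi A s t)) := l1.congr heq
    exact tendsto_nhds_unique l1' (l2.add l3)

lemma Phi_add (hε : 0 < ε) (hC : 0 ≤ C)
    (hδ : ∀ s u t : ℝ, S ≤ s → s ≤ u → u ≤ t → t ≤ T →
      ‖A s t - A s u - A u t‖ ≤ C * (t - s) ^ (1 + ε))
    (hA : ContinuousOn (fun q : ℝ × ℝ => A q.1 q.2) {q : ℝ × ℝ | S ≤ q.1 ∧ q.1 ≤ q.2 ∧ q.2 ≤ T})
    (hS0 : 0 ≤ S) (hT1 : T ≤ 1)
    {s u t : ℝ} (hSs : S ≤ s) (hsu : s ≤ u) (hut : u ≤ t) (htT : t ≤ T) :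
    Phi A s t = Phi A s u + Phi A u t := by
  have hsT : s ≤ T := le_trans (hsu.trans hut) htT
  have hts1 : t - s ≤ 1 := by linarith [le_trans hSs (hsu.trans hut)]
  rcases eq_or_lt_of_le (hsu.trans hut) with heq | hst
  · have hus : u = s := le_antisymm (heq ▸ hut) hsu
    rw [← heq, hus, Phi_diag hε hC hδ hSs hsT, zero_add]
  · -- s < t
    set θ := (u - s) / (t - s) with hθ
    have htspos : 0 < t - s := by linarith
    have hθ0 : 0 ≤ θ := by
      have h0 : 0 ≤ u - s := by linarith
      positivity
    have hθ1 : θ ≤ 1 := by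
      rw [hθ, div_le_one htspos]; linarith
    have huθ : u = s + θ * (t - s) := by
      rw [hθ, div_mul_cancel₀ _ htspos.ne']; ring
    set v : ℕ → ℝ := fun k => s + ((⌊θ * ((k:ℝ) + 1)⌋₊ : ℝ)) * (t - s) / ((k:ℝ) + 1) with hv
    have hfloor_le : ∀ k : ℕ, (⌊θ * ((k:ℝ) + 1)⌋₊ : ℝ) ≤ (k:ℝ) + 1 := by
      intro k
      have h1 : θ * ((k:ℝ) + 1) ≤ (k:ℝ) + 1 := by nlinarith [Nat.cast_nonneg (α := ℝ) k]
      exact le_trans (Nat.floor_le (by positivity)) h1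
    have hg : ∀ k : ℕ, Phi A s (v k) + Phi A (v k) t = Phi A s t := by
      intro k
      rcases Nat.eq_zero_or_pos ⌊θ * ((k:ℝ) + 1)⌋₊ with h0 | hpos
      · have hvs : v k = s := by simp [hv, h0]
        rw [hvs, Phi_diag hε hC hδ hSs hsT, zero_add]
      · have hle : ⌊θ * ((k:ℝ) + 1)⌋₊ ≤ k + 1 := by exact_mod_cast hfloor_le k
        have hrat := Phi_add_rat hε hC hδ hSs hst.le htT hts1 hpos hle
        have hvk : v k = s + ((⌊θ * ((k:ℝ) + 1)⌋₊ : ℝ)) * (t - s) / ((k + 1 : ℕ):ℝ) := by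
          simp only [hv]; push_cast; ring
        rw [hvk]
        exact hrat.symm
    have hvmem : ∀ k : ℕ, s ≤ v k ∧ v k ≤ t := by
      intro k
      constructor
      · have h0 : (0:ℝ) ≤ ((⌊θ * ((k:ℝ) + 1)⌋₊ : ℝ)) * (t - s) / ((k:ℝ) + 1) := by positivity
        simp only [hv]; linarith
      · have h1 : ((⌊θ * ((k:ℝ) + 1)⌋₊ : ℝ)) * (t - s) / ((k:ℝ) + 1)
            ≤ ((k:ℝ) + 1) * (t - s) / ((k:ℝ) + 1) := by
          gcongr
          exact hfloor_le k
        have h2 : ((k:ℝ) + 1) * (t - s) / ((k:ℝ) + 1) = t - s := by field_simp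
        simp only [hv]; linarith
    have hvtend : Filter.Tendsto v atTop (𝓝 u) := by
      rw [tendsto_iff_dist_tendsto_zero]
      apply squeeze_zero (fun k => dist_nonneg)
        (g := fun k : ℕ => (t - s) * (1 / ((k:ℝ) + 1)))
      · intro k
        rw [Real.dist_eq]
        have hexp : v k - u
            = (((⌊θ * ((k:ℝ) + 1)⌋₊ : ℝ)) - θ * ((k:ℝ) + 1)) * ((t - s) / ((k:ℝ) + 1)) := by
          simp only [hv]
          rw [huθ]
          field_simp
          ring
        rw [hexp, abs_mul]
        have h2 : |(t - s) / ((k:ℝ) + 1)| = (t - s) / ((k:ℝ) + 1) := abs_of_nonneg (by positivity)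
        have h3 : |(((⌊θ * ((k:ℝ) + 1)⌋₊ : ℝ)) - θ * ((k:ℝ) + 1))| ≤ 1 := by
          rw [abs_le]
          constructor
          · have := Nat.sub_one_lt_floor (θ * ((k:ℝ) + 1)); linarith
          · have := Nat.floor_le (show (0:ℝ) ≤ θ * ((k:ℝ) + 1) by positivity); linarith
        rw [h2]
        calc |(((⌊θ * ((k:ℝ) + 1)⌋₊ : ℝ)) - θ * ((k:ℝ) + 1))| * ((t - s) / ((k:ℝ) + 1))
            ≤ 1 * ((t - s) / ((k:ℝ) + 1)) :=
              mul_le_mul_of_nonneg_right h3 (by positivity)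
          _ = (t - s) * (1 / ((k:ℝ) + 1)) := by ring
      · simpa using tendsto_one_div_add_atTop_nhds_zero_nat.const_mul (t - s)
    have hcont := Phi_continuousOn hε hC hδ hA hS0 hT1
    have hc1 : Filter.Tendsto (fun k => Phi A s (v k)) atTop (𝓝 (Phi A s u)) := by
      have hmem : ((s, u) : ℝ × ℝ) ∈ {q : ℝ × ℝ | S ≤ q.1 ∧ q.1 ≤ q.2 ∧ q.2 ≤ T} :=
        ⟨hSs, hsu, le_trans hut htT⟩
      have hwithin : Filter.Tendsto (fun k => ((s, v k) : ℝ × ℝ)) atTop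
          (𝓝[{q : ℝ × ℝ | S ≤ q.1 ∧ q.1 ≤ q.2 ∧ q.2 ≤ T}] (s, u)) := by
        rw [tendsto_nhdsWithin_iff]
        exact ⟨tendsto_const_nhds.prodMk_nhds hvtend,
          Filter.Eventually.of_forall fun k => ⟨hSs, (hvmem k).1, le_trans (hvmem k).2 htT⟩⟩
      have := Filter.Tendsto.comp (hcont _ hmem) hwithin
      simpa [Function.comp_def] using this
    have hc2 : Filter.Tendsto (fun k => Phi A (v k) t) atTop (𝓝 (Phi A u t)) := by
      have hmem : ((u, t) : ℝ × ℝ) ∈ {q : ℝ × ℝ | S ≤ q.1 ∧ q.1 ≤ q.2 ∧ q.2 ≤ T} :=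
        ⟨le_trans hSs hsu, hut, htT⟩
      have hwithin : Filter.Tendsto (fun k => ((v k, t) : ℝ × ℝ)) atTop
          (𝓝[{q : ℝ × ℝ | S ≤ q.1 ∧ q.1 ≤ q.2 ∧ q.2 ≤ T}] (u, t)) := by
        rw [tendsto_nhdsWithin_iff]
        exact ⟨hvtend.prodMk_nhds tendsto_const_nhds,
          Filter.Eventually.of_forall fun k => ⟨le_trans hSs (hvmem k).1, (hvmem k).2, htT⟩⟩
      have := Filter.Tendsto.comp (hcont _ hmem) hwithin
      simpa [Function.comp_def] using this
    have hconst : Filter.Tendsto (fun k => Phi A s (v k) + Phi A (v k) t) atTop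
        (𝓝 (Phi A s t)) :=
      Filter.Tendsto.congr (fun k => (hg k).symm) tendsto_const_nhds
    exact tendsto_nhds_unique hconst (hc1.add hc2)

end part6

section part7
variable {E : Type*} [NormedAddCommGroup E]
variable {S T ε : ℝ}

lemma unique_aux (hε : 0 < ε) {c : ℝ} (hc : 0 ≤ c) {f : ℝ → E}
    (hstep : ∀ a b : ℝ, S ≤ a → a ≤ b → b ≤ T → ‖f b - f a‖ ≤ c * (b - a) ^ (1 + ε))
    {t : ℝ} (hSt : S ≤ t) (htT : t ≤ T) (n : ℕ) :
    ‖f t - f S‖ ≤ c * (t - S) ^ (1 + ε) * ((1:ℝ) / ((n:ℝ) + 1)) ^ ε := by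
  have hn : (n + 1 : ℕ) ≠ 0 := Nat.succ_ne_zero n
  have htel : f t - f S
      = ∑ i ∈ Finset.range (n + 1), (f (pt (n + 1) S t (i + 1)) - f (pt (n + 1) S t i)) := by
    rw [Finset.sum_range_sub (fun i => f (pt (n + 1) S t i)), pt_last hn, pt_zero]
  rw [htel]
  refine (norm_sum_le _ _).trans ?_
  have hterm : ∀ i ∈ Finset.range (n + 1),
      ‖f (pt (n + 1) S t (i + 1)) - f (pt (n + 1) S t i)‖
        ≤ c * ((t - S) / ((n:ℝ) + 1)) ^ (1 + ε) := by
    intro i hi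
    have hi' : i + 1 ≤ n + 1 := Finset.mem_range.mp hi
    have h := hstep (pt (n + 1) S t i) (pt (n + 1) S t (i + 1))
      (pt_ge hSt i) (pt_step hn hSt i) (le_trans (pt_le hn hSt hi') htT)
    rw [pt_succ_sub] at h
    push_cast at h ⊢
    exact h
  refine (Finset.sum_le_sum hterm).trans ?_
  rw [Finset.sum_const, Finset.card_range, nsmul_eq_mul]
  apply le_of_eq
  have e1 : ((t - S) / ((n:ℝ) + 1)) ^ (1 + ε)
      = (t - S) ^ (1 + ε) * ((1:ℝ) / ((n:ℝ) + 1)) ^ (1 + ε) := by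
    rw [show (t - S) / ((n:ℝ) + 1) = (t - S) * (1 / ((n:ℝ) + 1)) from by ring,
      Real.mul_rpow (sub_nonneg.mpr hSt) (by positivity)]
  have e2 : ((1:ℝ) / ((n:ℝ) + 1)) ^ (1 + ε)
      = (1 / ((n:ℝ) + 1)) * ((1:ℝ) / ((n:ℝ) + 1)) ^ ε := by
    rw [Real.rpow_add (by positivity) 1 ε, Real.rpow_one]
  push_cast
  rw [e1, e2]
  have hne : ((n:ℝ) + 1) ≠ 0 := by positivity
  field_simp

end part7

end SewAux

open SewAux

/-- **Deterministic sewing lemma** (Gubinelli).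
For `0 ≤ S ≤ T ≤ 1`, a continuous germ `A` on the triangle `[S,T]_≤` with
`|δA_{s,u,t}| ≤ C|t-s|^{1+ε}` admits a unique sewing `𝒜` with `𝒜_S = 0` and
`|𝒜_t - 𝒜_s - A_{s,t}| ≤ K|t-s|^{1+ε}`; moreover the bound holds with `K ≤ K₀·C`
for a constant `K₀ = K₀(ε,d)`. -/
theorem stmt_0 (d : ℕ) (hd : 1 ≤ d) (ε : ℝ) (hε : 0 < ε) :
    ∃ K₀ : ℝ, 0 < K₀ ∧
      ∀ (S T : ℝ), 0 ≤ S → S ≤ T → T ≤ 1 →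
      ∀ (A : ℝ → ℝ → EuclideanSpace ℝ (Fin d)) (C : ℝ), 0 < C →
      ContinuousOn (fun q : ℝ × ℝ => A q.1 q.2)
        {q : ℝ × ℝ | S ≤ q.1 ∧ q.1 ≤ q.2 ∧ q.2 ≤ T} →
      (∀ s u t : ℝ, S ≤ s → s ≤ u → u ≤ t → t ≤ T →
        ‖A s t - A s u - A u t‖ ≤ C * (t - s) ^ (1 + ε)) →
      ∃ 𝒜 : ℝ → EuclideanSpace ℝ (Fin d),
        (𝒜 S = 0 ∧
          ∃ K : ℝ, 0 < K ∧ ∀ s t : ℝ, S ≤ s → s ≤ t → t ≤ T →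
            ‖𝒜 t - 𝒜 s - A s t‖ ≤ K * (t - s) ^ (1 + ε)) ∧
        (∀ 𝒜' : ℝ → EuclideanSpace ℝ (Fin d),
          (𝒜' S = 0 ∧
            ∃ K : ℝ, 0 < K ∧ ∀ s t : ℝ, S ≤ s → s ≤ t → t ≤ T →
              ‖𝒜' t - 𝒜' s - A s t‖ ≤ K * (t - s) ^ (1 + ε)) →
          EqOn 𝒜 𝒜' (Icc S T)) ∧
        (∀ s t : ℝ, S ≤ s → s ≤ t → t ≤ T →
          ‖𝒜 t - 𝒜 s - A s t‖ ≤ K₀ * C * (t - s) ^ (1 + ε)) := by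
  have hZ := Zc_pos hε
  have h2p : (0:ℝ) < 2 ^ (1 + ε) := Real.rpow_pos_of_pos two_pos _
  refine ⟨2 ^ (1 + ε) * Zc ε, mul_pos h2p hZ, ?_⟩
  intro S T hS0 hST hT1 A C hC hA hδ
  have key : ∀ s t : ℝ, S ≤ s → s ≤ t → t ≤ T →
      ‖Phi A S t - Phi A S s - A s t‖ ≤ 2 ^ (1 + ε) * Zc ε * C * (t - s) ^ (1 + ε) := by
    intro s t hSs hst htT
    have hadd := Phi_add hε hC.le hδ hA hS0 hT1 (le_refl S) hSs hst htT
    rw [hadd, show Phi A S s + Phi A s t - Phi A S s - A s t = Phi A s t - A s t from by abel]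
    have hb := Phi_sub_A hε hC.le hδ hSs hst htT (by linarith)
    exact hb.trans (le_of_eq (by ring))
  have hK0C : (0:ℝ) < 2 ^ (1 + ε) * Zc ε * C := by positivity
  refine ⟨fun t => Phi A S t, ⟨?_, ⟨2 ^ (1 + ε) * Zc ε * C, hK0C, fun s t h1 h2 h3 => ?_⟩⟩,
    ?_, fun s t h1 h2 h3 => ?_⟩
  · exact Phi_diag hε hC.le hδ (le_refl S) hST
  · exact key s t h1 h2 h3
  · rintro 𝒜' ⟨h'0, K', hK', hb'⟩
    intro t ht
    obtain ⟨hSt, htT⟩ := ht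
    show Phi A S t = 𝒜' t
    set c : ℝ := 2 ^ (1 + ε) * Zc ε * C + K' with hc
    have hc0 : 0 ≤ c := by positivity
    set f : ℝ → EuclideanSpace ℝ (Fin d) := fun v => Phi A S v - 𝒜' v with hf
    have hstep : ∀ a b : ℝ, S ≤ a → a ≤ b → b ≤ T → ‖f b - f a‖ ≤ c * (b - a) ^ (1 + ε) := by
      intro a b ha hab hbT
      have e : f b - f a = (Phi A S b - Phi A S a - A a b) - (𝒜' b - 𝒜' a - A a b) := by
        simp only [hf]; abel
      rw [e]
      refine (norm_sub_le _ _).trans ?_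
      have h1 := key a b ha hab hbT
      have h2 := hb' a b ha hab hbT
      rw [hc]; linarith
    have hfS : f S = 0 := by
      simp only [hf, h'0, Phi_diag hε hC.le hδ (le_refl S) hST, sub_zero]
    have hbnd : ∀ n : ℕ, ‖f t‖ ≤ c * (t - S) ^ (1 + ε) * ((1:ℝ) / ((n:ℝ) + 1)) ^ ε := by
      intro n
      have := unique_aux (S := S) (T := T) hε hc0 hstep hSt htT n
      rwa [hfS, sub_zero] at this
    have hlim : Filter.Tendsto (fun n : ℕ => c * (t - S) ^ (1 + ε) * ((1:ℝ) / ((n:ℝ) + 1)) ^ ε)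
        Filter.atTop (nhds 0) := by
      simpa using (inv_pow_tendsto hε).const_mul (c * (t - S) ^ (1 + ε))
    have hle : ‖f t‖ ≤ 0 := ge_of_tendsto' hlim hbnd
    have : f t = 0 := norm_le_zero_iff.mp hle
    have := sub_eq_zero.mp this
    exact this
  · exact key s t h1 h2 h3
end

section
/- Let H ∈ (1/2,1) and ρ ∈ (H − 1/2, 1]. Then there exists a constant N = N(H, ρ) such that for every function f : [0,1] → ℝ^d with [f]_{C^ρ} := sup_{s ≠ t ∈ [0,1]} |f_t − f_s|/|t−s|^ρ < ∞ and every n ∈ ℕ, ∫_0^1 ( ∫_0^t (t/s)^{H−1/2}·|f_{κ_n(t)} − f_{κ_n(s)}|·(t−s)^{−H−1/2} ds )² dt ≤ N·[f]_{C^ρ}². -/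
/-- `κ_n(t) = ⌊nt⌋/n`. -/
noncomputable def kappa (n : ℕ) (t : ℝ) : ℝ := (⌊(n : ℝ) * t⌋ : ℝ) / n

open MeasureTheory intervalIntegral Set
set_option maxHeartbeats 1000000

lemma rpow_subadd {x y p : ℝ} (hx : 0 ≤ x) (hy : 0 ≤ y) (hp0 : 0 ≤ p) (hp1 : p ≤ 1) :
    (x + y) ^ p ≤ x ^ p + y ^ p := by
  have h := NNReal.rpow_add_le_add_rpow x.toNNReal y.toNNReal hp0 hp1
  have := NNReal.coe_le_coe.2 h
  push_cast at this
  rwa [Real.coe_toNNReal _ hx, Real.coe_toNNReal _ hy] at this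

noncomputable def kappa' (n : ℕ) (t : ℝ) : ℝ := (⌊(n : ℝ) * t⌋ : ℝ) / n

lemma kappa'_nonneg {n : ℕ} (hn : 1 ≤ n) {t : ℝ} (ht : 0 ≤ t) : 0 ≤ kappa' n t := by
  have hn' : (0:ℝ) < n := by exact_mod_cast hn
  have : (0:ℝ) ≤ (⌊(n : ℝ) * t⌋ : ℝ) := by
    exact_mod_cast Int.floor_nonneg.2 (by positivity)
  exact div_nonneg this hn'.le

lemma kappa'_le {n : ℕ} (hn : 1 ≤ n) {t : ℝ} : kappa' n t ≤ t := by
  have hn' : (0:ℝ) < n := by exact_mod_cast hn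
  rw [kappa', div_le_iff₀ hn']
  calc ((⌊(n : ℝ) * t⌋ : ℝ)) ≤ (n:ℝ) * t := Int.floor_le _
    _ = t * n := mul_comm _ _

lemma kappa'_mono {n : ℕ} (hn : 1 ≤ n) {s t : ℝ} (h : s ≤ t) : kappa' n s ≤ kappa' n t := by
  have hn' : (0:ℝ) < n := by exact_mod_cast hn
  rw [kappa', kappa']
  gcongr


lemma kappa'_lt {n : ℕ} (hn : 1 ≤ n) {t : ℝ} : t - 1/n < kappa' n t := by
  have hn' : (0:ℝ) < n := by exact_mod_cast hn
  rw [kappa', lt_div_iff₀ hn', sub_mul, div_mul_cancel₀ _ hn'.ne']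
  have := Int.sub_one_lt_floor ((n:ℝ) * t)
  linarith [this, mul_comm t (n:ℝ)]

lemma kappa'_block {n : ℕ} (hn : 1 ≤ n) {s t : ℝ} (h1 : kappa' n t ≤ s) (h2 : s ≤ t) :
    kappa' n s = kappa' n t := by
  have hn' : (0:ℝ) < n := by exact_mod_cast hn
  have hle : kappa' n s ≤ kappa' n t := kappa'_mono hn h2
  have hge : kappa' n t ≤ kappa' n s := by
    rw [kappa', kappa']
    have h2 : ((⌊(n:ℝ)*t⌋ : ℝ)) ≤ (n:ℝ) * s := by
      rw [kappa', div_le_iff₀ hn'] at h1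
      linarith [h1, mul_comm s (n:ℝ)]
    have h3 : ⌊(n:ℝ)*t⌋ ≤ ⌊(n:ℝ)*s⌋ := Int.le_floor.2 h2
    gcongr
  linarith

lemma meas_fk {d n : ℕ} (f : ℝ → EuclideanSpace ℝ (Fin d)) :
    Measurable (fun s : ℝ => f (kappa' n s)) := by
  have : (fun s : ℝ => f (kappa' n s))
      = (fun k : ℤ => f ((k:ℝ)/n)) ∘ (fun s : ℝ => ⌊(n:ℝ)*s⌋) := rfl
  rw [this]
  exact measurable_from_top.comp (measurable_const.mul measurable_id).floor

lemma measurable_rpow_const (q : ℝ) : Measurable fun x : ℝ => x ^ q :=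
  measurable_of_continuousOn_compl_singleton 0 (continuousOn_of_forall_continuousAt
    fun x hx => Real.continuousAt_rpow_const x q (Or.inl hx))

lemma meas_F {d n : ℕ} (H : ℝ) (f : ℝ → EuclideanSpace ℝ (Fin d)) (t : ℝ) :
    Measurable (fun s : ℝ =>
      (t/s)^(H-1/2) * ‖f (kappa' n t) - f (kappa' n s)‖ * (t-s)^(-H-1/2)) := by
  apply Measurable.mul
  apply Measurable.mul
  · exact (measurable_rpow_const _).comp (measurable_const.div measurable_id)
  · exact (measurable_const.sub (meas_fk f)).norm
  · exact (measurable_rpow_const _).comp (measurable_const.sub measurable_id)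

lemma first_half_generic (H e : ℝ) (ha0 : 0 < H - 1/2) (hH1 : H < 1) (he : e ≤ 0)
    {t : ℝ} (ht0 : 0 < t) :
    ∫ s in (0:ℝ)..(t/2), s^(1/2-H) * (t^(H-1/2) * (t-s)^e)
      ≤ ((t/2)^(1/2-H+1) * (t^(H-1/2) * (t/2)^e)) / (1/2-H+1) := by
  have hw : (-1:ℝ) < 1/2-H := by linarith
  have hm0 : (0:ℝ) < t/2 := by linarith
  have hcont : ContinuousOn (fun s : ℝ => t^(H-1/2) * (t-s)^e) (Set.uIcc 0 (t/2)) := by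
    rw [Set.uIcc_of_le hm0.le]
    apply continuousOn_const.mul
    apply ContinuousOn.rpow_const ((continuous_const.sub continuous_id).continuousOn)
    intro s hs
    left
    simp only [Pi.sub_apply, id_eq]
    have := hs.2
    intro hteq
    simp only [Set.mem_Icc] at hs
    nlinarith [hs.2]
  have hIl : IntervalIntegrable (fun s : ℝ => s^(1/2-H) * (t^(H-1/2) * (t-s)^e))
      volume 0 (t/2) := (intervalIntegrable_rpow' hw).mul_continuousOn hcont
  have hIr : IntervalIntegrable (fun s : ℝ => s^(1/2-H) * (t^(H-1/2) * (t/2)^e))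
      volume 0 (t/2) := (intervalIntegrable_rpow' hw).mul_const _
  have hmono : ∀ s ∈ Set.Icc (0:ℝ) (t/2),
      s^(1/2-H) * (t^(H-1/2) * (t-s)^e) ≤ s^(1/2-H) * (t^(H-1/2) * (t/2)^e) := by
    intro s hs
    simp only [Set.mem_Icc] at hs
    apply mul_le_mul_of_nonneg_left _ (Real.rpow_nonneg hs.1 _)
    apply mul_le_mul_of_nonneg_left _ (Real.rpow_nonneg ht0.le _)
    exact Real.rpow_le_rpow_of_nonpos hm0 (by linarith) he
  calc ∫ s in (0:ℝ)..(t/2), s^(1/2-H) * (t^(H-1/2) * (t-s)^e)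
      ≤ ∫ s in (0:ℝ)..(t/2), s^(1/2-H) * (t^(H-1/2) * (t/2)^e) :=
        integral_mono_on hm0.le hIl hIr hmono
    _ = ((t/2)^(1/2-H+1) - (0:ℝ)^(1/2-H+1)) / (1/2-H+1) * (t^(H-1/2) * (t/2)^e) := by
        rw [intervalIntegral.integral_mul_const, integral_rpow (Or.inl hw)]
    _ = ((t/2)^(1/2-H+1) * (t^(H-1/2) * (t/2)^e)) / (1/2-H+1) := by
        rw [Real.zero_rpow (by linarith : (1/2-H+1:ℝ) ≠ 0)]
        ring

lemma div2_rpow {t : ℝ} (ht0 : 0 < t) (x : ℝ) : (t/2)^x = t^x * 2^(-x) := by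
  rw [Real.div_rpow ht0.le (by norm_num), Real.rpow_neg (by norm_num), div_eq_mul_inv]

lemma rpow_prod_eval (H e : ℝ) {t : ℝ} (ht0 : 0 < t) :
    (t/2)^(1/2-H+1) * (t^(H-1/2) * (t/2)^e) = t^(e+1) * 2^(-(1/2-H+1)-e) := by
  have hm0 : (0:ℝ) < t/2 := by linarith
  calc (t/2)^(1/2-H+1) * (t^(H-1/2) * (t/2)^e)
      = ((t/2)^(1/2-H+1) * (t/2)^e) * t^(H-1/2) := by ring
    _ = (t/2)^((1/2-H+1)+e) * t^(H-1/2) := by rw [← Real.rpow_add hm0]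
    _ = t^((1/2-H+1)+e) * 2^(-((1/2-H+1)+e)) * t^(H-1/2) := by rw [div2_rpow ht0]
    _ = (t^((1/2-H+1)+e) * t^(H-1/2)) * 2^(-((1/2-H+1)+e)) := by ring
    _ = t^((1/2-H+1)+e+(H-1/2)) * 2^(-((1/2-H+1)+e)) := by rw [← Real.rpow_add ht0]
    _ = t^(e+1) * 2^(-(1/2-H+1)-e) := by
        rw [show ((1/2-H+1)+e+(H-1/2) : ℝ) = e+1 by ring,
          show (-((1/2-H+1)+e) : ℝ) = -(1/2-H+1)-e by ring]

lemma first_half₁ (H ρ : ℝ) (ha0 : 0 < H - 1/2) (hH1 : H < 1) (hρ0 : H - 1/2 < ρ)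
    (hρ1 : ρ ≤ 1) {t : ℝ} (ht0 : 0 < t) (ht1 : t ≤ 1) :
    ∫ s in (0:ℝ)..(t/2), s^(1/2-H) * (t^(H-1/2) * (t-s)^(ρ-H-1/2)) ≤ 4 := by
  refine (first_half_generic H (ρ-H-1/2) ha0 hH1 (by linarith) ht0).trans ?_
  rw [rpow_prod_eval H (ρ-H-1/2) ht0]
  have h1 : t^(ρ-H-1/2+1) ≤ 1 := Real.rpow_le_one ht0.le ht1 (by linarith)
  have h1' : 0 ≤ t^(ρ-H-1/2+1) := Real.rpow_nonneg ht0.le _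
  have h2 : (2:ℝ)^(-(1/2-H+1)-(ρ-H-1/2)) ≤ 2 := by
    calc (2:ℝ)^(-(1/2-H+1)-(ρ-H-1/2)) ≤ (2:ℝ)^(1:ℝ) :=
          Real.rpow_le_rpow_of_exponent_le one_le_two (by linarith)
      _ = 2 := Real.rpow_one 2
  have h2' : 0 ≤ (2:ℝ)^(-(1/2-H+1)-(ρ-H-1/2)) := Real.rpow_nonneg (by norm_num) _
  rw [div_le_iff₀ (by linarith : (0:ℝ) < 1/2-H+1)]
  nlinarith

lemma first_half₂ (H : ℝ) (ha0 : 0 < H - 1/2) (hH1 : H < 1)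
    {t : ℝ} (ht0 : 0 < t) (ht1 : t ≤ 1) :
    ∫ s in (0:ℝ)..(t/2), s^(1/2-H) * (t^(H-1/2) * (t-s)^(-H-1/2)) ≤ 4 * t^(1/2-H) := by
  refine (first_half_generic H (-H-1/2) ha0 hH1 (by linarith) ht0).trans ?_
  rw [rpow_prod_eval H (-H-1/2) ht0]
  have hX : 0 ≤ t^(-H-1/2+1) := Real.rpow_nonneg ht0.le _
  have hXeq : t^(-H-1/2+1) = t^(1/2-H) := by rw [show (-H-1/2+1:ℝ) = 1/2-H by ring]
  have h2 : (2:ℝ)^(-(1/2-H+1)-(-H-1/2)) ≤ 2 := by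
    calc (2:ℝ)^(-(1/2-H+1)-(-H-1/2)) ≤ (2:ℝ)^(1:ℝ) :=
          Real.rpow_le_rpow_of_exponent_le one_le_two (by linarith)
      _ = 2 := Real.rpow_one 2
  have h2' : 0 ≤ (2:ℝ)^(-(1/2-H+1)-(-H-1/2)) := Real.rpow_nonneg (by norm_num) _
  rw [div_le_iff₀ (by linarith : (0:ℝ) < 1/2-H+1), hXeq]
  have hX' : 0 ≤ t^(1/2-H) := Real.rpow_nonneg ht0.le _
  nlinarith

lemma prefactor_eq (H : ℝ) {t : ℝ} (ht0 : 0 < t) :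
    (t/2)^(1/2-H) * t^(H-1/2) = 2^(H-1/2) := by
  rw [div2_rpow ht0, show (-(1/2-H) : ℝ) = H-1/2 by ring, mul_assoc,
    mul_comm ((2:ℝ)^(H-1/2)) _, ← mul_assoc, ← Real.rpow_add ht0,
    show ((1/2-H)+(H-1/2) : ℝ) = 0 by ring, Real.rpow_zero, one_mul]

lemma prefactor_le (H : ℝ) (ha0 : 0 < H - 1/2) (hH1 : H < 1) {t : ℝ} (ht0 : 0 < t) :
    (t/2)^(1/2-H) * t^(H-1/2) ≤ 2 := by
  rw [prefactor_eq H ht0]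
  calc (2:ℝ)^(H-1/2) ≤ (2:ℝ)^(1:ℝ) :=
        Real.rpow_le_rpow_of_exponent_le one_le_two (by linarith)
    _ = 2 := Real.rpow_one 2

lemma second_half_generic (H e : ℝ) (ha0 : 0 < H - 1/2) {t c : ℝ}
    (ht0 : 0 < t) (hmc : t/2 < c) (hct : c < t) :
    ∫ s in (t/2)..c, s^(1/2-H) * (t^(H-1/2) * (t-s)^e)
      ≤ ((t/2)^(1/2-H) * t^(H-1/2)) * ∫ s in (t/2)..c, (t-s)^e := by
  have hm0 : (0:ℝ) < t/2 := by linarith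
  have hIl : IntervalIntegrable (fun s : ℝ => s^(1/2-H) * (t^(H-1/2) * (t-s)^e))
      volume (t/2) c := by
    apply ContinuousOn.intervalIntegrable
    rw [Set.uIcc_of_le hmc.le]
    apply ContinuousOn.mul
    · apply ContinuousOn.rpow_const continuousOn_id
      intro x hx
      simp only [Set.mem_Icc] at hx
      exact Or.inl (by simp only [id_eq]; intro h; nlinarith [hx.1])
    · apply continuousOn_const.mul
      apply ContinuousOn.rpow_const ((continuous_const.sub continuous_id).continuousOn)
      intro x hx
      simp only [Set.mem_Icc, Pi.sub_apply, id_eq] at hx ⊢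
      exact Or.inl (by intro h; nlinarith [hx.2])
  have hIr : IntervalIntegrable (fun s : ℝ => ((t/2)^(1/2-H) * t^(H-1/2)) * (t-s)^e)
      volume (t/2) c := by
    apply ContinuousOn.intervalIntegrable
    rw [Set.uIcc_of_le hmc.le]
    apply continuousOn_const.mul
    apply ContinuousOn.rpow_const ((continuous_const.sub continuous_id).continuousOn)
    intro x hx
    simp only [Set.mem_Icc, Pi.sub_apply, id_eq] at hx ⊢
    exact Or.inl (by intro h; nlinarith [hx.2])
  have hmono : ∀ s ∈ Set.Icc (t/2) c,
      s^(1/2-H) * (t^(H-1/2) * (t-s)^e) ≤ ((t/2)^(1/2-H) * t^(H-1/2)) * (t-s)^e := by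
    intro s hs
    simp only [Set.mem_Icc] at hs
    have h1 : s^(1/2-H) ≤ (t/2)^(1/2-H) :=
      Real.rpow_le_rpow_of_nonpos hm0 hs.1 (by linarith)
    have h2 : (0:ℝ) ≤ t^(H-1/2) * (t-s)^e :=
      mul_nonneg (Real.rpow_nonneg ht0.le _) (Real.rpow_nonneg (by nlinarith [hs.2]) _)
    calc s^(1/2-H) * (t^(H-1/2) * (t-s)^e) ≤ (t/2)^(1/2-H) * (t^(H-1/2) * (t-s)^e) :=
          mul_le_mul_of_nonneg_right h1 h2
      _ = ((t/2)^(1/2-H) * t^(H-1/2)) * (t-s)^e := by ring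
  calc ∫ s in (t/2)..c, s^(1/2-H) * (t^(H-1/2) * (t-s)^e)
      ≤ ∫ s in (t/2)..c, ((t/2)^(1/2-H) * t^(H-1/2)) * (t-s)^e :=
        integral_mono_on hmc.le hIl hIr hmono
    _ = ((t/2)^(1/2-H) * t^(H-1/2)) * ∫ s in (t/2)..c, (t-s)^e := integral_const_mul _ _

lemma second_half₁ (H ρ : ℝ) (ha0 : 0 < H - 1/2) (hH1 : H < 1) (hρ0 : H - 1/2 < ρ)
    (hρ1 : ρ ≤ 1) {t c : ℝ} (ht0 : 0 < t) (ht1 : t ≤ 1) (hmc : t/2 < c) (hct : c < t) :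
    ∫ s in (t/2)..c, s^(1/2-H) * (t^(H-1/2) * (t-s)^(ρ-H-1/2)) ≤ 2/(ρ-H+1/2) := by
  refine (second_half_generic H (ρ-H-1/2) ha0 ht0 hmc hct).trans ?_
  have hval : ∫ s in (t/2)..c, (t-s)^(ρ-H-1/2)
      = ((t-t/2)^(ρ-H-1/2+1) - (t-c)^(ρ-H-1/2+1)) / (ρ-H-1/2+1) := by
    rw [show (fun s : ℝ => (t-s)^(ρ-H-1/2)) = fun s : ℝ => (fun u : ℝ => u^(ρ-H-1/2)) (t-s)
        from rfl, integral_comp_sub_left (fun u : ℝ => u^(ρ-H-1/2)) t,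
      integral_rpow (Or.inl (by linarith))]
  have hvnn : 0 ≤ ∫ s in (t/2)..c, (t-s)^(ρ-H-1/2) := by
    rw [hval]
    apply div_nonneg _ (by linarith)
    have : (t-c)^(ρ-H-1/2+1) ≤ (t-t/2)^(ρ-H-1/2+1) :=
      Real.rpow_le_rpow (by linarith) (by linarith) (by linarith)
    linarith
  have hvle : ∫ s in (t/2)..c, (t-s)^(ρ-H-1/2) ≤ 1/(ρ-H+1/2) := by
    rw [hval]
    have h1 : (t-t/2)^(ρ-H-1/2+1) ≤ 1 :=
      Real.rpow_le_one (by linarith) (by linarith) (by linarith)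
    have h2 : 0 ≤ (t-c)^(ρ-H-1/2+1) := Real.rpow_nonneg (by linarith) _
    rw [div_le_div_iff₀ (by linarith) (by linarith)]
    nlinarith
  calc ((t/2)^(1/2-H) * t^(H-1/2)) * ∫ s in (t/2)..c, (t-s)^(ρ-H-1/2)
      ≤ 2 * (1/(ρ-H+1/2)) :=
        mul_le_mul (prefactor_le H ha0 hH1 ht0) hvle hvnn (by norm_num)
    _ = 2/(ρ-H+1/2) := by ring

lemma second_half₂ (H : ℝ) (ha0 : 0 < H - 1/2) (hH1 : H < 1)
    {t c : ℝ} (ht0 : 0 < t) (ht1 : t ≤ 1) (hmc : t/2 < c) (hct : c < t) :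
    ∫ s in (t/2)..c, s^(1/2-H) * (t^(H-1/2) * (t-s)^(-H-1/2))
      ≤ 2/(H-1/2) * (t-c)^(1/2-H) := by
  refine (second_half_generic H (-H-1/2) ha0 ht0 hmc hct).trans ?_
  have hval : ∫ s in (t/2)..c, (t-s)^(-H-1/2)
      = ((t-t/2)^(-H-1/2+1) - (t-c)^(-H-1/2+1)) / (-H-1/2+1) := by
    rw [show (fun s : ℝ => (t-s)^(-H-1/2)) = fun s : ℝ => (fun u : ℝ => u^(-H-1/2)) (t-s)
        from rfl, integral_comp_sub_left (fun u : ℝ => u^(-H-1/2)) t]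
    apply integral_rpow
    refine Or.inr ⟨by intro h; linarith, ?_⟩
    rw [Set.uIcc_of_le (by linarith : t - c ≤ t - t/2)]
    simp only [Set.mem_Icc]
    push_neg
    intro h
    linarith
  have hswitch : ((t-t/2)^(-H-1/2+1) - (t-c)^(-H-1/2+1)) / (-H-1/2+1)
      = ((t-c)^(1/2-H) - (t-t/2)^(1/2-H)) / (H-1/2) := by
    rw [show (-H-1/2+1:ℝ) = 1/2-H by ring, show (H-1/2:ℝ) = -(1/2-H) by ring,
      div_neg, ← neg_div, neg_sub]
  have hA : (t-t/2)^(1/2-H) ≤ (t-c)^(1/2-H) :=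
    Real.rpow_le_rpow_of_nonpos (by linarith) (by linarith) (by linarith)
  have hA0 : 0 ≤ (t-t/2)^(1/2-H) := Real.rpow_nonneg (by linarith) _
  have hvnn : 0 ≤ ∫ s in (t/2)..c, (t-s)^(-H-1/2) := by
    rw [hval, hswitch]
    apply div_nonneg (by linarith) (by linarith)
  have hvle : ∫ s in (t/2)..c, (t-s)^(-H-1/2) ≤ (t-c)^(1/2-H)/(H-1/2) := by
    rw [hval, hswitch]
    gcongr
    linarith
  calc ((t/2)^(1/2-H) * t^(H-1/2)) * ∫ s in (t/2)..c, (t-s)^(-H-1/2)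
      ≤ 2 * ((t-c)^(1/2-H)/(H-1/2)) :=
        mul_le_mul (prefactor_le H ha0 hH1 ht0) hvle hvnn (by norm_num)
    _ = 2/(H-1/2) * (t-c)^(1/2-H) := by ring

lemma inner_bound {d n : ℕ} (hn : 1 ≤ n) (H ρ : ℝ)
    (hH0 : 1/2 < H) (hH1 : H < 1) (hρ0 : H - 1/2 < ρ) (hρ1 : ρ ≤ 1)
    (f : ℝ → EuclideanSpace ℝ (Fin d)) (L : ℝ) (hL : 0 ≤ L)
    (hf : ∀ s t : ℝ, s ∈ Set.Icc (0:ℝ) 1 → t ∈ Set.Icc (0:ℝ) 1 →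
      ‖f t - f s‖ ≤ L * |t - s| ^ ρ)
    (t : ℝ) (ht0 : 0 < t) (ht1 : t ≤ 1) (htc : kappa' n t < t) :
    (∫ s in (0:ℝ)..t,
        (t/s)^(H-1/2) * ‖f (kappa' n t) - f (kappa' n s)‖ * (t-s)^(-H-1/2))
      ≤ L * ((4 + 2/(ρ-H+1/2)) + 8 * t^(1/2-H)
          + (2/(H-1/2)) * (n:ℝ)^(-ρ) * (t - kappa' n t)^(1/2-H)) := by
  have hn' : (0:ℝ) < n := by exact_mod_cast hn
  have ha0 : (0:ℝ) < H - 1/2 := by linarith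
  have hra : (0:ℝ) < ρ - H + 1/2 := by linarith
  have hρpos : (0:ℝ) < ρ := by linarith
  set c := kappa' n t with hcdef
  have hc0 : 0 ≤ c := kappa'_nonneg hn ht0.le
  have hRHS : 0 ≤ L * ((4 + 2/(ρ-H+1/2)) + 8 * t^(1/2-H)
      + (2/(H-1/2)) * (n:ℝ)^(-ρ) * (t - c)^(1/2-H)) := by
    have h1 : (0:ℝ) ≤ 2/(ρ-H+1/2) := div_nonneg (by norm_num) hra.le
    have h2 : 0 ≤ t^(1/2-H) := Real.rpow_nonneg ht0.le _
    have h3 : 0 ≤ (n:ℝ)^(-ρ) := Real.rpow_nonneg hn'.le _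
    have h4 : 0 ≤ (t-c)^(1/2-H) := Real.rpow_nonneg (by linarith) _
    have h5 : (0:ℝ) ≤ 2/(H-1/2) := div_nonneg (by norm_num) ha0.le
    apply mul_nonneg hL
    nlinarith [mul_nonneg (mul_nonneg h5 h3) h4]
  rcases eq_or_lt_of_le hc0 with hc0' | hcpos
  · -- kappa' n t = 0 : integrand vanishes
    have hzero : Set.EqOn (fun s : ℝ =>
        (t/s)^(H-1/2) * ‖f (kappa' n t) - f (kappa' n s)‖ * (t-s)^(-H-1/2))
        (fun _ => (0:ℝ)) (Set.Ioc 0 t) := by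
      intro s hs
      have hks : kappa' n s = kappa' n t := by
        have h1 : kappa' n s ≤ c := kappa'_mono hn hs.2
        have h2 : 0 ≤ kappa' n s := kappa'_nonneg hn hs.1.le
        simp only [← hcdef]
        linarith
      simp [hks]
    rw [intervalIntegral.integral_of_le ht0.le,
      MeasureTheory.setIntegral_congr_fun measurableSet_Ioc hzero]
    simpa using hRHS
  · -- main case : 0 < kappa' n t
    have hcpos' : (0:ℝ) < (⌊(n:ℝ)*t⌋:ℝ)/(n:ℝ) := by
      have h := hcpos
      rw [hcdef, kappa'] at h
      exact h
    have h1n : 1/(n:ℝ) ≤ c := by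
      rcases div_pos_iff.mp hcpos' with ⟨h1, _⟩ | ⟨_, h2⟩
      · have hfl : (1:ℝ) ≤ (⌊(n:ℝ)*t⌋:ℝ) := by
          exact_mod_cast (by exact_mod_cast h1 : (0:ℤ) < ⌊(n:ℝ)*t⌋)
        rw [hcdef, kappa']
        gcongr
      · linarith
    have htc2 : t < 2*c := by
      have h := kappa'_lt hn (n := n) (t := t)
      rw [← hcdef] at h
      linarith
    have hm0 : (0:ℝ) < t/2 := by linarith
    have hmc : t/2 < c := by linarith
    set F := fun s : ℝ => (t/s)^(H-1/2) * ‖f c - f (kappa' n s)‖ * (t-s)^(-H-1/2)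
      with hFdef
    set φ₁ := fun s : ℝ => s^(1/2-H) * (t^(H-1/2) * (t-s)^(ρ-H-1/2)) with hφ₁def
    set φ₂ := fun s : ℝ => s^(1/2-H) * (t^(H-1/2) * (t-s)^(-H-1/2)) with hφ₂def
    set ψ := fun s : ℝ => L * (φ₁ s + (n:ℝ)^(-ρ) * φ₂ s) with hψdef
    have hcont : ∀ e : ℝ, ContinuousOn (fun s : ℝ => t^(H-1/2) * (t-s)^e) (Set.uIcc 0 c) := by
      intro e
      rw [Set.uIcc_of_le hc0]
      apply continuousOn_const.mul
      apply ContinuousOn.rpow_const ((continuous_const.sub continuous_id).continuousOn)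
      intro x hx
      simp only [Set.mem_Icc, Pi.sub_apply, id_eq] at hx ⊢
      exact Or.inl (by intro h; nlinarith [hx.2, htc])
    have hI1 : IntervalIntegrable φ₁ volume 0 c :=
      (intervalIntegrable_rpow' (by linarith)).mul_continuousOn (hcont _)
    have hI2 : IntervalIntegrable φ₂ volume 0 c :=
      (intervalIntegrable_rpow' (by linarith)).mul_continuousOn (hcont _)
    have hIψ : IntervalIntegrable ψ volume 0 c := by
      rw [hψdef]
      exact (hI1.add (hI2.const_mul _)).const_mul _
    have hkey : ∀ s ∈ Set.Icc (0:ℝ) c, F s ≤ ψ s := by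
      intro s hs
      simp only [Set.mem_Icc] at hs
      rcases eq_or_lt_of_le hs.1 with h0 | hs0
      · subst h0
        simp only [hFdef, hψdef, hφ₁def, hφ₂def]
        rw [div_zero, Real.zero_rpow ha0.ne',
          Real.zero_rpow (show (1/2-H:ℝ) ≠ 0 by intro h; linarith)]
        simp
      · have hst : s < t := lt_of_le_of_lt hs.2 htc
        have hts0 : (0:ℝ) < t - s := by linarith
        have hκs0 : 0 ≤ kappa' n s := kappa'_nonneg hn hs0.le
        have hκs1 : kappa' n s ≤ 1 := le_trans (kappa'_le hn) (by linarith)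
        have hκts : kappa' n s ≤ c := by rw [hcdef]; exact kappa'_mono hn hst.le
        have hc1 : c ≤ 1 := by rw [hcdef]; exact le_trans (kappa'_le hn) ht1
        have hnorm : ‖f c - f (kappa' n s)‖ ≤ L * ((t-s)^ρ + (n:ℝ)^(-ρ)) := by
          have h1 := hf (kappa' n s) c ⟨hκs0, hκs1⟩ ⟨hc0, hc1⟩
          have hup : c - kappa' n s ≤ (t-s) + 1/n := by
            have h2 : s - 1/n < kappa' n s := kappa'_lt hn
            have h3 : c ≤ t := by rw [hcdef]; exact kappa'_le hn
            linarith
          calc ‖f c - f (kappa' n s)‖ ≤ L * |c - kappa' n s|^ρ := h1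
            _ ≤ L * ((t-s) + 1/n)^ρ := by
                apply mul_le_mul_of_nonneg_left _ hL
                rw [abs_of_nonneg (by linarith)]
                exact Real.rpow_le_rpow (by linarith) hup (by linarith)
            _ ≤ L * ((t-s)^ρ + ((1:ℝ)/n)^ρ) := by
                apply mul_le_mul_of_nonneg_left _ hL
                exact rpow_subadd hts0.le (by positivity) (by linarith) hρ1
            _ = L * ((t-s)^ρ + (n:ℝ)^(-ρ)) := by
                rw [one_div, Real.inv_rpow hn'.le, ← Real.rpow_neg hn'.le]
        have hsplit1 : (t/s)^(H-1/2) = t^(H-1/2) * s^(1/2-H) := by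
          rw [Real.div_rpow ht0.le hs0.le, show (1/2-H:ℝ) = -(H-1/2) by ring,
            Real.rpow_neg hs0.le, div_eq_mul_inv]
        have hsplit2 : (t-s)^(ρ-H-1/2) = (t-s)^ρ * (t-s)^(-H-1/2) := by
          rw [← Real.rpow_add hts0]
          ring_nf
        have base_nn : 0 ≤ t^(H-1/2) * s^(1/2-H) * (t-s)^(-H-1/2) :=
          mul_nonneg (mul_nonneg (Real.rpow_nonneg ht0.le _) (Real.rpow_nonneg hs0.le _))
            (Real.rpow_nonneg hts0.le _)
        simp only [hFdef, hψdef, hφ₁def, hφ₂def]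
        rw [hsplit1, hsplit2]
        calc t^(H-1/2) * s^(1/2-H) * ‖f c - f (kappa' n s)‖ * (t-s)^(-H-1/2)
            = (t^(H-1/2) * s^(1/2-H) * (t-s)^(-H-1/2)) * ‖f c - f (kappa' n s)‖ := by
              ring
          _ ≤ (t^(H-1/2) * s^(1/2-H) * (t-s)^(-H-1/2)) * (L * ((t-s)^ρ + (n:ℝ)^(-ρ))) :=
              mul_le_mul_of_nonneg_left hnorm base_nn
          _ = L * (s^(1/2-H) * (t^(H-1/2) * ((t-s)^ρ * (t-s)^(-H-1/2)))
                + (n:ℝ)^(-ρ) * (s^(1/2-H) * (t^(H-1/2) * (t-s)^(-H-1/2)))) := by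
              ring
    have hFmeas : Measurable F := by
      rw [hFdef, hcdef]
      exact meas_F H f t
    have hFnn : ∀ s ∈ Set.Icc (0:ℝ) c, 0 ≤ F s := by
      intro s hs
      simp only [hFdef]
      exact mul_nonneg (mul_nonneg (Real.rpow_nonneg (div_nonneg ht0.le hs.1) _)
        (norm_nonneg _)) (Real.rpow_nonneg (by nlinarith [hs.2, htc] : (0:ℝ) ≤ t - s) _)
    have hFint : IntervalIntegrable F volume 0 c := by
      apply hIψ.mono_fun hFmeas.aestronglyMeasurable
      filter_upwards [MeasureTheory.ae_restrict_mem measurableSet_uIoc] with x hx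
      rw [Set.uIoc_of_le hc0] at hx
      have hx' : x ∈ Set.Icc (0:ℝ) c := ⟨hx.1.le, hx.2⟩
      rw [Real.norm_of_nonneg (hFnn x hx'), Real.norm_eq_abs]
      exact (hkey x hx').trans (le_abs_self _)
    have hF2zero : Set.EqOn F 0 (Set.Ioc c t) := by
      intro s hs
      have hks : kappa' n s = c := by
        have h := kappa'_block hn (show kappa' n t ≤ s by rw [← hcdef]; exact hs.1.le) hs.2
        rw [hcdef]
        exact h
      simp only [hFdef]
      simp [hks]
    have hF2int : IntervalIntegrable F volume c t := by
      rw [intervalIntegrable_iff_integrableOn_Ioc_of_le htc.le]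
      exact (integrableOn_congr_fun hF2zero measurableSet_Ioc).mpr
        (integrableOn_zero)
    have hF2val : ∫ s in c..t, F s = 0 := by
      rw [integral_of_le htc.le, MeasureTheory.setIntegral_congr_fun measurableSet_Ioc hF2zero]
      simp
    have hsum := integral_add_adjacent_intervals hFint hF2int
    rw [show (∫ s in (0:ℝ)..t, F s) = (∫ s in (0:ℝ)..c, F s) + ∫ s in c..t, F s
      from hsum.symm, hF2val, add_zero]
    have step1 : ∫ s in (0:ℝ)..c, F s ≤ ∫ s in (0:ℝ)..c, ψ s :=
      integral_mono_on hc0 hFint hIψ hkey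
    have step2 : ∫ s in (0:ℝ)..c, ψ s
        = L * ((∫ s in (0:ℝ)..c, φ₁ s) + (n:ℝ)^(-ρ) * ∫ s in (0:ℝ)..c, φ₂ s) := by
      rw [hψdef]
      rw [intervalIntegral.integral_const_mul, integral_add hI1 (hI2.const_mul _), intervalIntegral.integral_const_mul]
    have hsub1 : Set.uIcc (0:ℝ) (t/2) ⊆ Set.uIcc (0:ℝ) c := by
      rw [Set.uIcc_of_le hm0.le, Set.uIcc_of_le hc0]
      exact Set.Icc_subset_Icc le_rfl (by linarith)
    have hsub2 : Set.uIcc (t/2) c ⊆ Set.uIcc (0:ℝ) c := by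
      rw [Set.uIcc_of_le hmc.le, Set.uIcc_of_le hc0]
      exact Set.Icc_subset_Icc (by linarith) le_rfl
    have hb1 : ∫ s in (0:ℝ)..c, φ₁ s ≤ 4 + 2/(ρ-H+1/2) := by
      rw [show (∫ s in (0:ℝ)..c, φ₁ s)
          = (∫ s in (0:ℝ)..(t/2), φ₁ s) + ∫ s in (t/2)..c, φ₁ s from
        (integral_add_adjacent_intervals (hI1.mono_set hsub1) (hI1.mono_set hsub2)).symm]
      have x1 := first_half₁ H ρ ha0 hH1 hρ0 hρ1 ht0 ht1
      have x2 := second_half₁ H ρ ha0 hH1 hρ0 hρ1 ht0 ht1 hmc htc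
      simp only [hφ₁def]
      linarith
    have hb2 : ∫ s in (0:ℝ)..c, φ₂ s ≤ 4*t^(1/2-H) + 2/(H-1/2)*(t-c)^(1/2-H) := by
      rw [show (∫ s in (0:ℝ)..c, φ₂ s)
          = (∫ s in (0:ℝ)..(t/2), φ₂ s) + ∫ s in (t/2)..c, φ₂ s from
        (integral_add_adjacent_intervals (hI2.mono_set hsub1) (hI2.mono_set hsub2)).symm]
      have x1 := first_half₂ H ha0 hH1 ht0 ht1
      have x2 := second_half₂ H ha0 hH1 ht0 ht1 hmc htc
      simp only [hφ₂def]
      linarith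
    have hnρ1 : (n:ℝ)^(-ρ) ≤ 1 :=
      Real.rpow_le_one_of_one_le_of_nonpos (by exact_mod_cast hn) (by linarith)
    have hnρ0 : 0 ≤ (n:ℝ)^(-ρ) := Real.rpow_nonneg hn'.le _
    have htX0 : 0 ≤ t^(1/2-H) := Real.rpow_nonneg ht0.le _
    have htC0 : 0 ≤ 2/(H-1/2)*(t-c)^(1/2-H) :=
      mul_nonneg (div_nonneg (by norm_num) ha0.le) (Real.rpow_nonneg (by linarith) _)
    calc ∫ s in (0:ℝ)..c, F s ≤ ∫ s in (0:ℝ)..c, ψ s := step1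
      _ = L * ((∫ s in (0:ℝ)..c, φ₁ s) + (n:ℝ)^(-ρ) * ∫ s in (0:ℝ)..c, φ₂ s) := step2
      _ ≤ L * ((4 + 2/(ρ-H+1/2)) + 8 * t^(1/2-H)
            + (2/(H-1/2)) * (n:ℝ)^(-ρ) * (t - c)^(1/2-H)) := by
          apply mul_le_mul_of_nonneg_left _ hL
          have e1 : (n:ℝ)^(-ρ) * ∫ s in (0:ℝ)..c, φ₂ s
              ≤ (n:ℝ)^(-ρ) * (4*t^(1/2-H) + 2/(H-1/2)*(t-c)^(1/2-H)) :=
            mul_le_mul_of_nonneg_left hb2 hnρ0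
          have e2 : (n:ℝ)^(-ρ) * (4*t^(1/2-H)) ≤ 4*t^(1/2-H) :=
            mul_le_of_le_one_left (by positivity) hnρ1
          nlinarith [e1, e2, hb1]

lemma inner_sq_bound {d n : ℕ} (hn : 1 ≤ n) (H ρ : ℝ)
    (hH0 : 1/2 < H) (hH1 : H < 1) (hρ0 : H - 1/2 < ρ) (hρ1 : ρ ≤ 1)
    (f : ℝ → EuclideanSpace ℝ (Fin d)) (L : ℝ) (hL : 0 ≤ L)
    (hf : ∀ s t : ℝ, s ∈ Set.Icc (0:ℝ) 1 → t ∈ Set.Icc (0:ℝ) 1 →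
      ‖f t - f s‖ ≤ L * |t - s| ^ ρ)
    (t : ℝ) (ht0 : 0 < t) (ht1 : t ≤ 1) (htc : kappa' n t < t) :
    (∫ s in (0:ℝ)..t,
        (t/s)^(H-1/2) * ‖f (kappa' n t) - f (kappa' n s)‖ * (t-s)^(-H-1/2))^2
      ≤ 3*L^2*((4+2/(ρ-H+1/2))^2 + 64*t^(1-2*H)
          + (2/(H-1/2))^2 * ((n:ℝ)^(-ρ))^2 * (t - kappa' n t)^(1-2*H)) := by
  have hI0 : 0 ≤ ∫ s in (0:ℝ)..t,
      (t/s)^(H-1/2) * ‖f (kappa' n t) - f (kappa' n s)‖ * (t-s)^(-H-1/2) := by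
    apply integral_nonneg ht0.le
    intro u hu
    exact mul_nonneg (mul_nonneg (Real.rpow_nonneg (div_nonneg ht0.le hu.1) _)
      (norm_nonneg _)) (Real.rpow_nonneg (by linarith [hu.2]) _)
  have hIB := inner_bound hn H ρ hH0 hH1 hρ0 hρ1 f L hL hf t ht0 ht1 htc
  have hsq := pow_le_pow_left₀ hI0 hIB 2
  refine hsq.trans ?_
  have hu2 : (t^(1/2-H))^2 = t^(1-2*H) := by
    rw [sq, ← Real.rpow_add ht0, show ((1/2-H)+(1/2-H):ℝ) = 1-2*H by ring]
  have hv2 : ((t - kappa' n t)^(1/2-H))^2 = (t - kappa' n t)^(1-2*H) := by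
    rw [sq, ← Real.rpow_add (by linarith), show ((1/2-H)+(1/2-H):ℝ) = 1-2*H by ring]
  rw [← hu2, ← hv2, mul_pow]
  set u := t^(1/2-H)
  set v := (t - kappa' n t)^(1/2-H)
  set w := (n:ℝ)^(-ρ)
  set A := 4+2/(ρ-H+1/2)
  set C := 2/(H-1/2)
  nlinarith [mul_nonneg (sq_nonneg L) (sq_nonneg (A - 8*u)),
    mul_nonneg (sq_nonneg L) (sq_nonneg (A - C*w*v)),
    mul_nonneg (sq_nonneg L) (sq_nonneg (8*u - C*w*v))]

lemma grid_main (H : ℝ) (ha0 : 0 < H - 1/2) (hH1 : H < 1) (n : ℕ) (hn : 1 ≤ n) :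
    IntervalIntegrable (fun t : ℝ => (t - kappa' n t)^(1-2*H)) volume 0 1 ∧
    ∫ t in (0:ℝ)..1, (t - kappa' n t)^(1-2*H) = (n:ℝ)^(2*H-1)/(2-2*H) := by
  have hn' : (0:ℝ) < n := by exact_mod_cast hn
  have hexp : (-1:ℝ) < 1-2*H := by linarith
  set W := fun t : ℝ => (t - kappa' n t)^(1-2*H) with hW
  set a : ℕ → ℝ := fun k => (k:ℝ)/n with ha
  have hle : ∀ k : ℕ, a k ≤ a (k+1) := by
    intro k
    simp only [ha]
    gcongr
    push_cast
    linarith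
  have hkfloor : ∀ k : ℕ, ∀ t ∈ Set.Ioo (a k) (a (k+1)), kappa' n t = a k := by
    intro k t ht
    have h1 : (k:ℝ) < (n:ℝ)*t := by
      have := ht.1
      simp only [ha] at this
      rw [div_lt_iff₀ hn'] at this
      linarith [mul_comm t (n:ℝ)]
    have h2 : (n:ℝ)*t < (k:ℝ)+1 := by
      have := ht.2
      simp only [ha] at this
      rw [lt_div_iff₀ hn'] at this
      push_cast at this
      linarith [mul_comm t (n:ℝ)]
    have hfl : ⌊(n:ℝ)*t⌋ = (k:ℤ) := by
      rw [Int.floor_eq_iff]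
      constructor
      · push_cast; linarith
      · push_cast; linarith
    simp only [kappa', hfl, ha]
    norm_num
  have hW_ae : ∀ k : ℕ, ∀ᵐ t ∂(volume : Measure ℝ),
      t ∈ Set.uIoc (a k) (a (k+1)) → W t = (t - a k)^(1-2*H) := by
    intro k
    have h1 : ∀ᵐ t ∂(volume : Measure ℝ), t ∉ ({a (k+1)} : Set ℝ) :=
      measure_eq_zero_iff_ae_notMem.mp (measure_singleton _)
    filter_upwards [h1] with t hne htmem
    rw [Set.uIoc_of_le (hle k)] at htmem
    have hIoo : t ∈ Set.Ioo (a k) (a (k+1)) :=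
      ⟨htmem.1, lt_of_le_of_ne htmem.2 (by simpa using hne)⟩
    simp only [hW]
    rw [hkfloor k t hIoo]
  have hIIk : ∀ k : ℕ, IntervalIntegrable W volume (a k) (a (k+1)) := by
    intro k
    have h0 : IntervalIntegrable (fun u : ℝ => u^(1-2*H)) volume 0 (1/n) :=
      intervalIntegrable_rpow' hexp
    have base := h0.comp_sub_right (a k)
    have e1 : (0:ℝ) + a k = a k := by ring
    have e2 : 1/(n:ℝ) + a k = a (k+1) := by
      simp only [ha]
      push_cast
      field_simp
      ring
    rw [e1, e2] at base
    rw [intervalIntegrable_iff] at base ⊢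
    refine base.congr ?_
    have hae : W =ᶠ[ae (volume.restrict (Set.uIoc (a k) (a (k+1))))]
        (fun t => (t - a k)^(1-2*H)) :=
      (ae_restrict_iff' measurableSet_uIoc).mpr (hW_ae k)
    exact hae.symm
  have hval : ∀ k : ℕ, ∫ t in a k..a (k+1), W t = ((1:ℝ)/n)^(2-2*H)/(2-2*H) := by
    intro k
    rw [integral_congr_ae (hW_ae k)]
    rw [show (fun t : ℝ => (t - a k)^(1-2*H))
        = fun t : ℝ => (fun u : ℝ => u^(1-2*H)) (t - a k) from rfl]
    rw [integral_comp_sub_right (fun u : ℝ => u^(1-2*H)) (a k)]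
    have e1 : a k - a k = 0 := by ring
    have e2 : a (k+1) - a k = 1/(n:ℝ) := by
      simp only [ha]
      push_cast
      field_simp
      ring
    rw [e1, e2, integral_rpow (Or.inl hexp),
      Real.zero_rpow (show (1-2*H+1:ℝ) ≠ 0 by intro h; linarith),
      show (1-2*H+1:ℝ) = 2-2*H by ring]
    ring
  have hsum := sum_integral_adjacent_intervals (μ := volume) (a := a) (n := n)
    (fun k _ => hIIk k)
  have hend0 : a 0 = 0 := by simp [ha]
  have hend1 : a n = 1 := by simp only [ha]; field_simp
  constructor
  · have := IntervalIntegrable.trans_iterate (a := a) (n := n) (fun k _ => hIIk k)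
    rwa [hend0, hend1] at this
  · have h2 : ∫ t in (0:ℝ)..1, W t = ∑ k ∈ Finset.range n, ∫ t in a k..a (k+1), W t := by
      rw [hsum, hend0, hend1]
    have : ∀ k ∈ Finset.range n, ∫ t in a k..a (k+1), W t = ((1:ℝ)/n)^(2-2*H)/(2-2*H) :=
      fun k _ => hval k
    rw [h2, Finset.sum_congr rfl this, Finset.sum_const, Finset.card_range, nsmul_eq_mul]
    rw [one_div, Real.inv_rpow hn'.le, ← Real.rpow_neg hn'.le]
    have hkey : (n:ℝ) * (n:ℝ)^(-(2-2*H)) = (n:ℝ)^(2*H-1) := by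
      nth_rewrite 1 [show ((n:ℝ)) = (n:ℝ)^(1:ℝ) from (Real.rpow_one _).symm]
      rw [← Real.rpow_add hn', show (1 + -(2-2*H):ℝ) = 2*H-1 by ring]
    rw [← hkey]
    ring


/-- Lemma 3.12, bound (3.18): for `H ∈ (1/2,1)` and `ρ ∈ (H-1/2, 1]` there is
`N = N(H,ρ)` such that for every `ρ`-Hölder function `f : [0,1] → ℝ^d`
(with Hölder constant `L`) and every `n ∈ ℕ`,
`∫_0^1 (∫_0^t (t/s)^{H-1/2} |f_{κ_n(t)} - f_{κ_n(s)}| (t-s)^{-H-1/2} ds)² dt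
  ≤ N [f]_{C^ρ}²`. -/
theorem stmt_13 (d : ℕ) (hd : 1 ≤ d) (H ρ : ℝ)
    (hH0 : 1/2 < H) (hH1 : H < 1) (hρ0 : H - 1/2 < ρ) (hρ1 : ρ ≤ 1) :
    ∃ N : ℝ, 0 < N ∧
      ∀ (f : ℝ → EuclideanSpace ℝ (Fin d)) (L : ℝ), 0 ≤ L →
      (∀ s t : ℝ, s ∈ Set.Icc (0:ℝ) 1 → t ∈ Set.Icc (0:ℝ) 1 →
        ‖f t - f s‖ ≤ L * |t - s| ^ ρ) →
      ∀ n : ℕ, 1 ≤ n →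
        (∫ t in (0:ℝ)..1,
          (∫ s in (0:ℝ)..t,
            (t/s) ^ (H - 1/2) * ‖f (kappa n t) - f (kappa n s)‖
              * (t - s) ^ (-H - 1/2)) ^ 2)
          ≤ N * L ^ 2 := by

  have ha0 : (0:ℝ) < H - 1/2 := by linarith
  have hra : (0:ℝ) < ρ - H + 1/2 := by linarith
  have h2H : (0:ℝ) < 2-2*H := by linarith
  refine ⟨3*((4+2/(ρ-H+1/2))^2 + 64/(2-2*H) + (2/(H-1/2))^2/(2-2*H)), ?_, ?_⟩
  · have hA : (0:ℝ) < 4+2/(ρ-H+1/2) := by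
      have := div_nonneg (by norm_num : (0:ℝ) ≤ 2) hra.le
      linarith
    have h1 : (0:ℝ) ≤ 64/(2-2*H) := div_nonneg (by norm_num) h2H.le
    have h2 : (0:ℝ) ≤ (2/(H-1/2))^2/(2-2*H) := div_nonneg (sq_nonneg _) h2H.le
    nlinarith [pow_pos hA 2]
  · intro f L hL hf n hn
    have hn' : (0:ℝ) < n := by exact_mod_cast hn
    rw [show kappa = kappa' from rfl]
    set G := fun t : ℝ => 3*L^2*((4+2/(ρ-H+1/2))^2 + 64*t^(1-2*H)
        + (2/(H-1/2))^2 * ((n:ℝ)^(-ρ))^2 * (t - kappa' n t)^(1-2*H)) with hG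
    obtain ⟨hWint, hWval⟩ := grid_main H ha0 hH1 n hn
    have hG1 : IntervalIntegrable (fun t : ℝ => t^(1-2*H)) volume 0 1 :=
      intervalIntegrable_rpow' (by linarith)
    have hGint : IntervalIntegrable G volume 0 1 := by
      rw [hG]
      exact (((_root_.intervalIntegrable_const).add (hG1.const_mul _)).add
        (hWint.const_mul _)).const_mul _
    have hGval : ∫ t in (0:ℝ)..1, G t
        = 3*L^2*((4+2/(ρ-H+1/2))^2 + 64*(1/(2-2*H))
            + (2/(H-1/2))^2*((n:ℝ)^(-ρ))^2*((n:ℝ)^(2*H-1)/(2-2*H))) := by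
      rw [hG, intervalIntegral.integral_const_mul,
        integral_add ((_root_.intervalIntegrable_const).add (hG1.const_mul _))
          (hWint.const_mul _),
        integral_add _root_.intervalIntegrable_const (hG1.const_mul _),
        intervalIntegral.integral_const, intervalIntegral.integral_const_mul, intervalIntegral.integral_const_mul, hWval,
        integral_rpow (Or.inl (by linarith : (-1:ℝ) < 1-2*H)),
        Real.zero_rpow (show (1-2*H+1:ℝ) ≠ 0 by intro h; linarith), Real.one_rpow,
        show (1-2*H+1:ℝ) = 2-2*H by ring]
      simp
    have hfinal : ∫ t in (0:ℝ)..1, G t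
        ≤ 3*((4+2/(ρ-H+1/2))^2 + 64/(2-2*H) + (2/(H-1/2))^2/(2-2*H)) * L^2 := by
      rw [hGval]
      have hw2 : ((n:ℝ)^(-ρ))^2 * (n:ℝ)^(2*H-1) ≤ 1 := by
        rw [sq, ← Real.rpow_add hn', ← Real.rpow_add hn',
          show (-ρ + -ρ + (2*H-1):ℝ) = 2*H-1-2*ρ by ring]
        exact Real.rpow_le_one_of_one_le_of_nonpos (by exact_mod_cast hn) (by linarith)
      have hC2 : (0:ℝ) ≤ (2/(H-1/2))^2 := sq_nonneg _
      have hkey : (2/(H-1/2))^2*((n:ℝ)^(-ρ))^2*((n:ℝ)^(2*H-1)/(2-2*H))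
          ≤ (2/(H-1/2))^2/(2-2*H) := by
        have h1 : (2/(H-1/2))^2*(((n:ℝ)^(-ρ))^2*(n:ℝ)^(2*H-1)) ≤ (2/(H-1/2))^2 := by
          calc (2/(H-1/2))^2*(((n:ℝ)^(-ρ))^2*(n:ℝ)^(2*H-1)) ≤ (2/(H-1/2))^2 * 1 :=
              mul_le_mul_of_nonneg_left hw2 hC2
            _ = (2/(H-1/2))^2 := mul_one _
        calc (2/(H-1/2))^2*((n:ℝ)^(-ρ))^2*((n:ℝ)^(2*H-1)/(2-2*H))
            = ((2/(H-1/2))^2*(((n:ℝ)^(-ρ))^2*(n:ℝ)^(2*H-1)))/(2-2*H) := by ring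
          _ ≤ (2/(H-1/2))^2/(2-2*H) := by gcongr
      have hXY : (4+2/(ρ-H+1/2))^2 + 64*(1/(2-2*H))
            + (2/(H-1/2))^2*((n:ℝ)^(-ρ))^2*((n:ℝ)^(2*H-1)/(2-2*H))
          ≤ (4+2/(ρ-H+1/2))^2 + 64/(2-2*H) + (2/(H-1/2))^2/(2-2*H) := by
        have h64 : 64*(1/(2-2*H)) = 64/(2-2*H) := by ring
        linarith [hkey]
      calc 3*L^2*((4+2/(ρ-H+1/2))^2 + 64*(1/(2-2*H))
            + (2/(H-1/2))^2*((n:ℝ)^(-ρ))^2*((n:ℝ)^(2*H-1)/(2-2*H)))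
          ≤ 3*L^2*((4+2/(ρ-H+1/2))^2 + 64/(2-2*H) + (2/(H-1/2))^2/(2-2*H)) :=
            mul_le_mul_of_nonneg_left hXY (by positivity)
        _ = 3*((4+2/(ρ-H+1/2))^2 + 64/(2-2*H) + (2/(H-1/2))^2/(2-2*H)) * L^2 := by ring
    have hGintOn : MeasureTheory.Integrable G (volume.restrict (Set.Ioc (0:ℝ) 1)) := by
      rw [intervalIntegrable_iff_integrableOn_Ioc_of_le (by norm_num : (0:ℝ) ≤ 1)] at hGint
      exact hGint
    have hae : ∀ᵐ t ∂(volume.restrict (Set.Ioc (0:ℝ) 1)),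
        (∫ s in (0:ℝ)..t,
          (t/s) ^ (H - 1/2) * ‖f (kappa' n t) - f (kappa' n s)‖
            * (t - s) ^ (-H - 1/2)) ^ 2 ≤ G t := by
      have hS : volume (Set.range (fun k : ℤ => (k:ℝ)/n)) = 0 :=
        (Set.countable_range _).measure_zero _
      filter_upwards [MeasureTheory.ae_restrict_mem measurableSet_Ioc,
        MeasureTheory.ae_restrict_of_ae (measure_eq_zero_iff_ae_notMem.mp hS)] with t ht htS
      have htc : kappa' n t < t := by
        rcases lt_or_eq_of_le (kappa'_le hn (n := n) (t := t)) with h | h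
        · exact h
        · exact absurd ⟨⌊(n:ℝ)*t⌋, h⟩ htS
      exact inner_sq_bound hn H ρ hH0 hH1 hρ0 hρ1 f L hL hf t ht.1 ht.2 htc
    calc ∫ t in (0:ℝ)..1,
          (∫ s in (0:ℝ)..t,
            (t/s) ^ (H - 1/2) * ‖f (kappa' n t) - f (kappa' n s)‖
              * (t - s) ^ (-H - 1/2)) ^ 2
        = ∫ t in Set.Ioc (0:ℝ) 1,
          (∫ s in (0:ℝ)..t,
            (t/s) ^ (H - 1/2) * ‖f (kappa' n t) - f (kappa' n s)‖
              * (t - s) ^ (-H - 1/2)) ^ 2 := integral_of_le (by norm_num)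
      _ ≤ ∫ t in Set.Ioc (0:ℝ) 1, G t :=
          MeasureTheory.integral_mono_of_nonneg
            (Filter.Eventually.of_forall (fun t => sq_nonneg _)) hGintOn hae
      _ = ∫ t in (0:ℝ)..1, G t := (integral_of_le (by norm_num)).symm
      _ ≤ 3*((4+2/(ρ-H+1/2))^2 + 64/(2-2*H) + (2/(H-1/2))^2/(2-2*H)) * L^2 := hfinal
end

section
/- Let H ∈ (1/2,1) and ρ ∈ (H − 1/2, 1]. Then there exists a constant N = N(H, ρ) such that for every function f : [0,1] → ℝ^d with [f]_{C^ρ} := sup_{s ≠ t ∈ [0,1]} |f_t − f_s|/|t−s|^ρ < ∞, ∫_0^1 ( ∫_0^t (t/s)^{H−1/2}·|f_t − f_s|·(t−s)^{−H−1/2} ds )² dt ≤ N·[f]_{C^ρ}². -/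
open intervalIntegral Real

/-- Lemma 3.12, bound (3.19): for `H ∈ (1/2,1)` and `ρ ∈ (H-1/2, 1]` there is
`N = N(H,ρ)` such that for every `ρ`-Hölder function `f : [0,1] → ℝ^d`
(with Hölder constant `L`),
`∫_0^1 (∫_0^t (t/s)^{H-1/2} |f_t - f_s| (t-s)^{-H-1/2} ds)² dt ≤ N [f]_{C^ρ}²`. -/
theorem stmt_14 (d : ℕ) (hd : 1 ≤ d) (H ρ : ℝ)
    (hH0 : 1/2 < H) (hH1 : H < 1) (hρ0 : H - 1/2 < ρ) (hρ1 : ρ ≤ 1) :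
    ∃ N : ℝ, 0 < N ∧
      ∀ (f : ℝ → EuclideanSpace ℝ (Fin d)) (L : ℝ), 0 ≤ L →
      (∀ s t : ℝ, s ∈ Set.Icc (0:ℝ) 1 → t ∈ Set.Icc (0:ℝ) 1 →
        ‖f t - f s‖ ≤ L * |t - s| ^ ρ) →
        (∫ t in (0:ℝ)..1,
          (∫ s in (0:ℝ)..t,
            (t/s) ^ (H - 1/2) * ‖f t - f s‖ * (t - s) ^ (-H - 1/2)) ^ 2)
          ≤ N * L ^ 2 := by
  set a : ℝ := H - 1/2 with ha_def
  set b : ℝ := ρ - H - 1/2 with hb_def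
  have hρ0' : H - 1/2 < ρ := ha_def ▸ hρ0
  have ha0 : 0 < a := by rw [ha_def]; linarith
  have hb0 : b < 0 := by rw [hb_def]; linarith
  have hb1 : -1 < b := by rw [hb_def]; linarith
  have h32 : (0:ℝ) < 3/2 - H := by linarith
  have hb1' : (0:ℝ) < b + 1 := by linarith
  set K : ℝ := (2:ℝ) ^ (-b) / (3/2 - H) + (2:ℝ) ^ a / (b + 1) with hK_def
  have hK0 : 0 < K := by
    apply add_pos <;> exact div_pos (Real.rpow_pos_of_pos two_pos _) (by linarith)
  refine ⟨K^2, by positivity, ?_⟩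
  intro f L hL hf
  have e0 : (0:ℝ) < ρ + 1/2 - H := by linarith
  -- inner bound
  have inner_bd : ∀ t ∈ Set.Icc (0:ℝ) 1,
      (∫ s in (0:ℝ)..t, (t/s) ^ (H - 1/2) * ‖f t - f s‖ * (t - s) ^ (-H - 1/2)) ≤ L * K := by
    intro t ht
    rcases eq_or_lt_of_le ht.1 with h0 | ht0
    · rw [← h0, intervalIntegral.integral_same]; positivity
    by_cases hint : IntervalIntegrable
        (fun s => (t/s) ^ (H - 1/2) * ‖f t - f s‖ * (t - s) ^ (-H - 1/2)) MeasureTheory.volume 0 t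
    swap
    · rw [intervalIntegral.integral_undef hint]; positivity
    set A : ℝ := t ^ a * (t/2) ^ b with hA_def
    have hA0 : 0 ≤ A := by positivity
    set g : ℝ → ℝ := fun s => L * (A * s ^ (1/2 - H) + (2:ℝ) ^ a * (t - s) ^ b) with hg_def
    have hgnn : ∀ s ∈ Set.Icc (0:ℝ) t, 0 ≤ g s := by
      intro s hs
      have h1 : 0 ≤ s ^ (1/2 - H) := Real.rpow_nonneg hs.1 _
      have h2 : 0 ≤ (t - s) ^ b := Real.rpow_nonneg (by linarith [hs.2]) _
      show 0 ≤ L * (A * s ^ (1/2 - H) + (2:ℝ) ^ a * (t - s) ^ b)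
      have h3 : (0:ℝ) ≤ (2:ℝ) ^ a := by positivity
      positivity
    have hg1 : IntervalIntegrable (fun s => (s:ℝ) ^ (1/2 - H)) MeasureTheory.volume 0 t :=
      intervalIntegrable_rpow' (by linarith)
    have hg2 : IntervalIntegrable (fun s => (t - s) ^ b) MeasureTheory.volume 0 t := by
      have := ((intervalIntegrable_rpow' (a := 0) (b := t) hb1).comp_sub_left t).symm
      simpa using this
    have hg : IntervalIntegrable g MeasureTheory.volume 0 t := by
      apply IntervalIntegrable.const_mul
      exact ((hg1.const_mul A).add (hg2.const_mul _))
    have hle : ∀ s ∈ Set.Icc (0:ℝ) t,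
        (t/s) ^ (H - 1/2) * ‖f t - f s‖ * (t - s) ^ (-H - 1/2) ≤ g s := by
      intro s hs
      rcases eq_or_lt_of_le hs.1 with h0 | hs0
      · -- s = 0
        rw [← h0]
        have : (t/(0:ℝ)) ^ (H - 1/2) = 0 := by
          rw [div_zero, Real.zero_rpow (by linarith)]
        rw [this, zero_mul, zero_mul]
        exact hgnn 0 (by constructor <;> [rfl; exact ht0.le])
      rcases eq_or_lt_of_le hs.2 with h1 | hst
      · -- s = t
        rw [h1, show t - t = (0:ℝ) from sub_self t, Real.zero_rpow (by linarith), mul_zero]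
        exact hgnn t ⟨ht0.le, le_refl t⟩
      -- 0 < s < t
      have hts : 0 < t - s := by linarith
      have step1 : ‖f t - f s‖ ≤ L * (t - s) ^ ρ := by
        have := hf s t ⟨le_of_lt hs0, le_trans hs.2 ht.2⟩ ht
        rwa [abs_of_pos hts] at this
      have key : (t/s) ^ (H - 1/2) * ‖f t - f s‖ * (t - s) ^ (-H - 1/2)
          ≤ L * ((t/s) ^ a * (t - s) ^ b) := by
        have hds : (0:ℝ) ≤ t/s := by positivity
        calc (t/s) ^ (H - 1/2) * ‖f t - f s‖ * (t - s) ^ (-H - 1/2)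
            ≤ (t/s) ^ a * (L * (t - s) ^ ρ) * (t - s) ^ (-H - 1/2) :=
              mul_le_mul_of_nonneg_right
                (mul_le_mul_of_nonneg_left step1 (Real.rpow_nonneg hds _))
                (Real.rpow_nonneg hts.le _)
          _ = L * ((t/s) ^ a * (t - s) ^ b) := by
              rw [hb_def, show ρ - H - 1/2 = ρ + (-H - 1/2) by ring, Real.rpow_add hts]
              ring
      refine key.trans ?_
      show L * ((t/s) ^ a * (t - s) ^ b) ≤ L * (A * s ^ (1/2 - H) + (2:ℝ) ^ a * (t - s) ^ b)
      apply mul_le_mul_of_nonneg_left _ hL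
      rcases le_or_gt s (t/2) with hhalf | hhalf
      · -- s ≤ t/2 : (t-s)^b ≤ (t/2)^b
        have h2 : (t - s) ^ b ≤ (t/2) ^ b :=
          Real.rpow_le_rpow_of_nonpos (by linarith) (by linarith) hb0.le
        have h3 : (t/s) ^ a = t ^ a * s ^ (1/2 - H) := by
          rw [Real.div_rpow ht0.le hs0.le, div_eq_mul_inv, ← Real.rpow_neg hs0.le]
          rw [show -a = 1/2 - H by rw [ha_def]; ring]
        have h6 : (t/s) ^ a * (t - s) ^ b ≤ A * s ^ (1/2 - H) := by
          rw [h3, hA_def]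
          calc t ^ a * s ^ (1/2 - H) * (t - s) ^ b
              ≤ t ^ a * s ^ (1/2 - H) * (t/2) ^ b := by
                have hs14 : (0:ℝ) ≤ t ^ a * s ^ (1/2 - H) := by positivity
                exact mul_le_mul_of_nonneg_left h2 hs14
            _ = t ^ a * (t/2) ^ b * s ^ (1/2 - H) := by ring
        have h4 : (0:ℝ) ≤ (2:ℝ) ^ a * (t - s) ^ b := by
          have := Real.rpow_nonneg hts.le b
          positivity
        linarith
      · -- t/2 < s : (t/s)^a ≤ 2^a
        have h2 : (t/s) ^ a ≤ (2:ℝ) ^ a := by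
          apply Real.rpow_le_rpow (by positivity) _ ha0.le
          rw [div_le_iff₀ hs0]; linarith
        have h6 : (t/s) ^ a * (t - s) ^ b ≤ (2:ℝ) ^ a * (t - s) ^ b :=
          mul_le_mul_of_nonneg_right h2 (Real.rpow_nonneg hts.le _)
        have h5 : (0:ℝ) ≤ A * s ^ (1/2 - H) := by
          have := Real.rpow_nonneg hs0.le (1/2 - H)
          positivity
        linarith
    have mono := intervalIntegral.integral_mono_on ht0.le hint hg hle
    refine mono.trans ?_
    -- compute ∫ g
    have i1 : (∫ s in (0:ℝ)..t, s ^ (1/2 - H)) = t ^ (3/2 - H) / (3/2 - H) := by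
      rw [integral_rpow (Or.inl (by linarith))]
      rw [Real.zero_rpow (by linarith), show (1:ℝ)/2 - H + 1 = 3/2 - H by ring]
      ring
    have i2 : (∫ s in (0:ℝ)..t, (t - s) ^ b) = t ^ (b+1) / (b+1) := by
      rw [intervalIntegral.integral_comp_sub_left (fun u => u ^ b) t]
      simp only [sub_self, sub_zero]
      rw [integral_rpow (Or.inl hb1), Real.zero_rpow (by linarith)]
      ring
    have expand : (∫ s in (0:ℝ)..t, g s)
        = L * (A * (t ^ (3/2 - H) / (3/2 - H)) + (2:ℝ)^a * (t ^ (b+1) / (b+1))) := by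
      simp only [hg_def]
      rw [intervalIntegral.integral_const_mul, intervalIntegral.integral_add
        (hg1.const_mul A) (hg2.const_mul _), intervalIntegral.integral_const_mul,
        intervalIntegral.integral_const_mul, i1, i2]
    rw [expand]
    -- now bound by L * K
    have hab : t ^ a * t ^ b * t ^ (3/2 - H) = t ^ (ρ + 1/2 - H) := by
      rw [← Real.rpow_add ht0, ← Real.rpow_add ht0]
      congr 1
      rw [ha_def, hb_def]; ring
    have hAt : A * t ^ (3/2 - H) = (2:ℝ)^(-b) * t ^ (ρ + 1/2 - H) := by
      rw [hA_def, Real.div_rpow ht0.le two_pos.le, Real.rpow_neg two_pos.le, ← hab]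
      ring
    have htb : t ^ (b+1) = t ^ (ρ + 1/2 - H) := by
      congr 1
      rw [hb_def]; ring
    have hte : t ^ (ρ + 1/2 - H) ≤ 1 := Real.rpow_le_one ht.1 ht.2 e0.le
    have hsum : A * (t ^ (3/2 - H) / (3/2 - H)) + (2:ℝ)^a * (t ^ (b+1) / (b+1))
        = K * t ^ (ρ + 1/2 - H) := by
      calc A * (t ^ (3/2 - H) / (3/2 - H)) + (2:ℝ)^a * (t ^ (b+1) / (b+1))
          = (A * t ^ (3/2 - H)) / (3/2 - H) + ((2:ℝ)^a * t ^ (ρ + 1/2 - H)) / (b+1) := by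
            rw [htb]; ring
        _ = ((2:ℝ)^(-b) * t ^ (ρ + 1/2 - H)) / (3/2 - H)
              + ((2:ℝ)^a * t ^ (ρ + 1/2 - H)) / (b+1) := by rw [hAt]
        _ = K * t ^ (ρ + 1/2 - H) := by rw [hK_def]; ring
    calc L * (A * (t ^ (3/2 - H) / (3/2 - H)) + (2:ℝ)^a * (t ^ (b+1) / (b+1)))
        = L * (K * t ^ (ρ + 1/2 - H)) := by rw [hsum]
      _ ≤ L * (K * 1) := by
          apply mul_le_mul_of_nonneg_left _ hL
          exact mul_le_mul_of_nonneg_left hte hK0.le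
      _ = L * K := by ring
  -- outer bound
  have inner_nonneg : ∀ t ∈ Set.Icc (0:ℝ) 1,
      0 ≤ ∫ s in (0:ℝ)..t, (t/s) ^ (H - 1/2) * ‖f t - f s‖ * (t - s) ^ (-H - 1/2) := by
    intro t ht
    apply intervalIntegral.integral_nonneg ht.1
    intro s hs
    have hds : (0:ℝ) ≤ t/s := div_nonneg ht.1 hs.1
    have hts : (0:ℝ) ≤ t - s := by linarith [hs.2]
    have h1 := Real.rpow_nonneg hds (H - 1/2)
    have h2 := Real.rpow_nonneg hts (-H - 1/2)
    positivity
  by_cases houter : IntervalIntegrable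
      (fun t => (∫ s in (0:ℝ)..t, (t/s) ^ (H - 1/2) * ‖f t - f s‖ * (t - s) ^ (-H - 1/2)) ^ 2)
      MeasureTheory.volume 0 1
  swap
  · rw [intervalIntegral.integral_undef houter]; positivity
  have hsq : ∀ t ∈ Set.Icc (0:ℝ) 1,
      (∫ s in (0:ℝ)..t, (t/s) ^ (H - 1/2) * ‖f t - f s‖ * (t - s) ^ (-H - 1/2)) ^ 2
        ≤ (L * K) ^ 2 := by
    intro t ht
    exact pow_le_pow_left₀ (inner_nonneg t ht) (inner_bd t ht) 2
  have final := intervalIntegral.integral_mono_on (by norm_num : (0:ℝ) ≤ 1) houter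
    (intervalIntegrable_const) hsq
  refine final.trans ?_
  rw [intervalIntegral.integral_const, smul_eq_mul]
  exact le_of_eq (by ring)
end

section
/- Let d ≥ 1, j ≥ 1, p ≥ 1 and λ > 0. For i = 1,…,j let A_i be invertible d×d real matrices and let σ_i be d×d real matrices with σ_i σ_i^T ⪰ λ·I_d. Define M := (1/j)·Σ_{i=1}^j (A_i σ_i)(A_i σ_i)^T. Then M is invertible and ‖M^{−1}‖^p ≤ λ^{−p}·(1/j)·Σ_{i=1}^j ‖A_i^{−1}‖^{2p}, where ‖·‖ denotes the operator norm. -/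
open Matrix

set_option maxHeartbeats 1000000
set_option synthInstance.maxHeartbeats 1000000

/-- The operator (Euclidean) norm of a `d × d` real matrix. -/
noncomputable def opNorm {d : ℕ} (M : Matrix (Fin d) (Fin d) ℝ) : ℝ :=
  ‖(Matrix.toEuclideanCLM (𝕜 := ℝ) M :
      EuclideanSpace ℝ (Fin d) →L[ℝ] EuclideanSpace ℝ (Fin d))‖

lemma dot_eq_norm_sq {d : ℕ} (v : Fin d → ℝ) :
    v ⬝ᵥ v = ‖((WithLp.equiv 2 (Fin d → ℝ)).symm v : EuclideanSpace ℝ (Fin d))‖ ^ 2 := by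
  rw [EuclideanSpace.norm_eq, Real.sq_sqrt (by positivity)]
  simp [dotProduct, sq]

lemma clm_apply' {d : ℕ} (M : Matrix (Fin d) (Fin d) ℝ) (v : Fin d → ℝ) :
    Matrix.toEuclideanCLM (𝕜 := ℝ) M ((WithLp.equiv 2 (Fin d → ℝ)).symm v)
      = (WithLp.equiv 2 (Fin d → ℝ)).symm (M *ᵥ v) :=
  Matrix.toEuclideanCLM_toLp M v

lemma mulVec_dot_le {d : ℕ} (M : Matrix (Fin d) (Fin d) ℝ) (v : Fin d → ℝ) :
    (M *ᵥ v) ⬝ᵥ (M *ᵥ v) ≤ opNorm M ^ 2 * (v ⬝ᵥ v) := by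
  rw [dot_eq_norm_sq, dot_eq_norm_sq, ← clm_apply', ← mul_pow]
  have := (Matrix.toEuclideanCLM (𝕜 := ℝ) M).le_opNorm
    ((WithLp.equiv 2 (Fin d → ℝ)).symm v)
  exact pow_le_pow_left₀ (norm_nonneg _) this 2

lemma opNorm_transpose {d : ℕ} (M : Matrix (Fin d) (Fin d) ℝ) : opNorm Mᵀ = opNorm M := by
  have h : Mᵀ = star M := by ext i j; simp [Matrix.star_apply]
  unfold opNorm
  rw [h, map_star, ContinuousLinearMap.star_eq_adjoint]
  exact ContinuousLinearMap.adjoint.norm_map _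

lemma opNorm_pos {d : ℕ} {N : Matrix (Fin d) (Fin d) ℝ} (hN : N ≠ 0) : 0 < opNorm N := by
  unfold opNorm
  rw [norm_pos_iff]
  intro h0
  have hz : Matrix.toEuclideanCLM (𝕜 := ℝ) N = Matrix.toEuclideanCLM (𝕜 := ℝ) (0 : Matrix (Fin d) (Fin d) ℝ) := by
    rw [h0, map_zero]
  exact hN ((Matrix.toEuclideanCLM (𝕜 := ℝ)).injective hz)

lemma quad_of_psd {d : ℕ} {N : Matrix (Fin d) (Fin d) ℝ} (c : ℝ)
    (h : (N - c • (1 : Matrix (Fin d) (Fin d) ℝ)).PosSemidef) (v : Fin d → ℝ) :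
    c * (v ⬝ᵥ v) ≤ v ⬝ᵥ (N *ᵥ v) := by
  have := (Matrix.posSemidef_iff_dotProduct_mulVec.1 h).2 v
  simpa [sub_mulVec, dotProduct_sub, smul_mulVec, one_mulVec, dotProduct_smul,
    sub_nonneg, smul_eq_mul] using this

lemma dot_eq_inner' {d : ℕ} (v w : Fin d → ℝ) :
    v ⬝ᵥ w = (inner ℝ ((WithLp.equiv 2 (Fin d → ℝ)).symm v)
      ((WithLp.equiv 2 (Fin d → ℝ)).symm w) : ℝ) := by
  rw [PiLp.inner_apply]
  simp [dotProduct, mul_comm]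

lemma coercive_bound {d : ℕ} (M : Matrix (Fin d) (Fin d) ℝ) (μ : ℝ) (hμ : 0 < μ)
    (h : ∀ v : Fin d → ℝ, μ * (v ⬝ᵥ v) ≤ v ⬝ᵥ (M *ᵥ v)) :
    IsUnit M ∧ opNorm M⁻¹ ≤ μ⁻¹ := by
  set T := (Matrix.toEuclideanCLM (𝕜 := ℝ) M :
      EuclideanSpace ℝ (Fin d) →L[ℝ] EuclideanSpace ℝ (Fin d)) with hT
  have key : ∀ x : EuclideanSpace ℝ (Fin d), μ * ‖x‖ ≤ ‖T x‖ := by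
    intro x
    set v : Fin d → ℝ := WithLp.equiv 2 (Fin d → ℝ) x with hv
    have hx : x = (WithLp.equiv 2 (Fin d → ℝ)).symm v := rfl
    have h1 : μ * ‖x‖ ^ 2 ≤ ‖x‖ * ‖T x‖ := by
      calc μ * ‖x‖ ^ 2 = μ * (v ⬝ᵥ v) := by
            rw [dot_eq_inner', ← hx, real_inner_self_eq_norm_sq]
        _ ≤ v ⬝ᵥ (M *ᵥ v) := h v
        _ = (inner ℝ x (T x) : ℝ) := by
            have hTv : T x = (WithLp.equiv 2 (Fin d → ℝ)).symm (M *ᵥ v) := by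
              rw [hT, hx]
              exact Matrix.toEuclideanCLM_toLp M v
            rw [dot_eq_inner', ← hx, hTv]
        _ ≤ ‖x‖ * ‖T x‖ := real_inner_le_norm _ _
    rcases eq_or_ne x 0 with rfl | hx0
    · simp
    · have hxn : 0 < ‖x‖ := norm_pos_iff.2 hx0
      have := h1
      rw [sq] at this
      nlinarith
  have hdet : IsUnit M.det := by
    by_contra hdet
    have : M.det = 0 := by simpa [isUnit_iff_ne_zero] using hdet
    obtain ⟨v, hv0, hv⟩ := (Matrix.exists_mulVec_eq_zero_iff).2 this
    set x : EuclideanSpace ℝ (Fin d) := (WithLp.equiv 2 (Fin d → ℝ)).symm v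
    have hx0 : x ≠ 0 := by
      simpa [x] using (WithLp.equiv 2 (Fin d → ℝ)).symm.injective.ne (a₂ := (0 : Fin d → ℝ)) hv0
    have hTx : T x = 0 := by
      rw [hT]
      exact (Matrix.toEuclideanCLM_toLp M v).trans (by simp [hv])
    have := key x
    rw [hTx] at this
    simp at this
    have : ‖x‖ = 0 := by nlinarith [norm_pos_iff.2 hx0, norm_nonneg x]
    exact hx0 (norm_eq_zero.mp this)
  refine ⟨(Matrix.isUnit_iff_isUnit_det M).2 hdet, ?_⟩
  have hMM : M * M⁻¹ = 1 := Matrix.mul_nonsing_inv M hdet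
  refine ContinuousLinearMap.opNorm_le_bound _ (by positivity) fun y => ?_
  set x := (Matrix.toEuclideanCLM (𝕜 := ℝ) M⁻¹) y with hx
  have hTx : T x = y := by
    rw [hx, hT, ← ContinuousLinearMap.comp_apply, ← ContinuousLinearMap.mul_def,
      ← _root_.map_mul (Matrix.toEuclideanCLM (𝕜 := ℝ)) M M⁻¹,
      hMM, _root_.map_one (Matrix.toEuclideanCLM (𝕜 := ℝ)), ContinuousLinearMap.one_apply]
  rw [← hTx]
  calc ‖x‖ = μ⁻¹ * (μ * ‖x‖) := by field_simp
    _ ≤ μ⁻¹ * ‖T x‖ := by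
        have h0 : 0 ≤ μ⁻¹ := by positivity
        exact mul_le_mul_of_nonneg_left (key x) h0

lemma step_bound {d : ℕ} (lam : ℝ) (A s : Matrix (Fin d) (Fin d) ℝ)
    (hA : IsUnit A) (hlam : 0 < lam) (ha : 0 < opNorm A⁻¹)
    (hs : (s * sᵀ - lam • (1 : Matrix (Fin d) (Fin d) ℝ)).PosSemidef) (x : Fin d → ℝ) :
    lam * (opNorm A⁻¹ ^ 2)⁻¹ * (x ⬝ᵥ x) ≤ x ⬝ᵥ (((A * s) * (A * s)ᵀ) *ᵥ x) := by
  set a := opNorm A⁻¹ with hadef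
  set y := Aᵀ *ᵥ x with hy
  have hxy : x = (A⁻¹)ᵀ *ᵥ y := by
    rw [hy, mulVec_mulVec, ← Matrix.transpose_mul, Matrix.mul_nonsing_inv A
      ((Matrix.isUnit_iff_isUnit_det A).1 hA), Matrix.transpose_one, one_mulVec]
  have hx_le : x ⬝ᵥ x ≤ a ^ 2 * (y ⬝ᵥ y) := by
    calc x ⬝ᵥ x = ((A⁻¹)ᵀ *ᵥ y) ⬝ᵥ ((A⁻¹)ᵀ *ᵥ y) := by rw [← hxy]
      _ ≤ opNorm (A⁻¹)ᵀ ^ 2 * (y ⬝ᵥ y) := mulVec_dot_le _ _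
      _ = a ^ 2 * (y ⬝ᵥ y) := by rw [opNorm_transpose]
  have hquad : x ⬝ᵥ (((A * s) * (A * s)ᵀ) *ᵥ x) = (sᵀ *ᵥ y) ⬝ᵥ (sᵀ *ᵥ y) := by
    rw [← mulVec_mulVec, dotProduct_mulVec, ← Matrix.mulVec_transpose,
      Matrix.transpose_mul, ← mulVec_mulVec]
  have hquad2 : y ⬝ᵥ ((s * sᵀ) *ᵥ y) = (sᵀ *ᵥ y) ⬝ᵥ (sᵀ *ᵥ y) := by
    rw [← mulVec_mulVec, dotProduct_mulVec, ← Matrix.mulVec_transpose]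
  have h1 : lam * (y ⬝ᵥ y) ≤ (sᵀ *ᵥ y) ⬝ᵥ (sᵀ *ᵥ y) := by
    rw [← hquad2]; exact quad_of_psd lam hs y
  rw [hquad]
  have ha2 : (0:ℝ) < a ^ 2 := by positivity
  calc lam * (a ^ 2)⁻¹ * (x ⬝ᵥ x) ≤ lam * (a ^ 2)⁻¹ * (a ^ 2 * (y ⬝ᵥ y)) := by
        apply mul_le_mul_of_nonneg_left hx_le; positivity
    _ = lam * (y ⬝ᵥ y) := by field_simp
    _ ≤ (sᵀ *ᵥ y) ⬝ᵥ (sᵀ *ᵥ y) := h1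

lemma mean_ineq {j : ℕ} (hj : 1 ≤ j) {p : ℝ} (hp : 1 ≤ p) (b : Fin j → ℝ)
    (hb : ∀ i, 0 < b i) :
    (((j : ℝ)⁻¹ * ∑ i, (b i)⁻¹)⁻¹) ^ p ≤ (j : ℝ)⁻¹ * ∑ i, b i ^ p := by
  have hjpos : (0 : ℝ) < j := by exact_mod_cast hj
  haveI : Nonempty (Fin j) := ⟨⟨0, hj⟩⟩
  set S1 := ∑ i, (b i)⁻¹ with hS1def
  set S2 := ∑ i, b i with hS2def
  have hS1 : 0 < S1 := Finset.sum_pos (fun i _ => inv_pos.2 (hb i)) Finset.univ_nonempty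
  have hS2 : 0 < S2 := Finset.sum_pos (fun i _ => hb i) Finset.univ_nonempty
  have key : (j : ℝ) ^ 2 ≤ S1 * S2 := by
    have cs := Finset.sum_mul_sq_le_sq_mul_sq Finset.univ
      (fun i => Real.sqrt (b i)⁻¹) (fun i => Real.sqrt (b i))
    have h1 : ∀ i : Fin j, Real.sqrt (b i)⁻¹ * Real.sqrt (b i) = 1 := by
      intro i
      rw [← Real.sqrt_mul (inv_pos.2 (hb i)).le, inv_mul_cancel₀ (hb i).ne', Real.sqrt_one]
    have h2 : ∀ i : Fin j, Real.sqrt (b i)⁻¹ ^ 2 = (b i)⁻¹ := fun i =>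
      Real.sq_sqrt (inv_pos.2 (hb i)).le
    have h3 : ∀ i : Fin j, Real.sqrt (b i) ^ 2 = b i := fun i =>
      Real.sq_sqrt (hb i).le
    simp only [h1, h2, h3, Finset.sum_const, Finset.card_univ, Fintype.card_fin,
      nsmul_eq_mul, mul_one] at cs
    simpa [sq] using cs
  have amhm : ((j : ℝ)⁻¹ * S1)⁻¹ ≤ (j : ℝ)⁻¹ * S2 := by
    have h4 : (j : ℝ) / S1 ≤ S2 / j := by
      rw [div_le_div_iff₀ hS1 hjpos]
      nlinarith [key]
    calc ((j : ℝ)⁻¹ * S1)⁻¹ = (j : ℝ) / S1 := by field_simp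
      _ ≤ S2 / j := h4
      _ = (j : ℝ)⁻¹ * S2 := by ring
  have hinv_nonneg : 0 ≤ ((j : ℝ)⁻¹ * S1)⁻¹ := by positivity
  have step1 : (((j : ℝ)⁻¹ * S1)⁻¹) ^ p ≤ ((j : ℝ)⁻¹ * S2) ^ p :=
    Real.rpow_le_rpow hinv_nonneg amhm (le_trans zero_le_one hp)
  have step2 : ((j : ℝ)⁻¹ * S2) ^ p ≤ (j : ℝ)⁻¹ * ∑ i, b i ^ p := by
    have hw : ∀ i ∈ (Finset.univ : Finset (Fin j)), (0:ℝ) ≤ (j : ℝ)⁻¹ := fun _ _ => by positivity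
    have hw' : ∑ _i : Fin j, (j : ℝ)⁻¹ = 1 := by
      simp [Finset.sum_const, Finset.card_univ]
      field_simp
    have hz : ∀ i ∈ (Finset.univ : Finset (Fin j)), (0:ℝ) ≤ b i := fun i _ => (hb i).le
    have := Real.rpow_arith_mean_le_arith_mean_rpow Finset.univ
      (fun _ => (j : ℝ)⁻¹) b hw hw' hz hp
    calc ((j : ℝ)⁻¹ * S2) ^ p = (∑ i, (j:ℝ)⁻¹ * b i) ^ p := by
          rw [hS2def, Finset.mul_sum]
      _ ≤ ∑ i, (j:ℝ)⁻¹ * b i ^ p := this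
      _ = (j : ℝ)⁻¹ * ∑ i, b i ^ p := by rw [Finset.mul_sum]
  exact step1.trans step2

lemma sum_mulVec' {d j : ℕ} (C : Fin j → Matrix (Fin d) (Fin d) ℝ) (x : Fin d → ℝ) :
    (∑ i, C i) *ᵥ x = ∑ i, C i *ᵥ x := by
  ext k
  simp only [Matrix.mulVec, dotProduct, Matrix.sum_apply, Finset.sum_apply,
    Finset.sum_mul]
  rw [Finset.sum_comm]

lemma dot_sum' {d j : ℕ} (v : Fin d → ℝ) (w : Fin j → Fin d → ℝ) :
    v ⬝ᵥ (∑ i, w i) = ∑ i, v ⬝ᵥ w i := by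
  simp only [dotProduct, Finset.sum_apply, Finset.mul_sum]
  rw [Finset.sum_comm]

/-- The linear-algebra step (4.15) from the proof of Lemma 4.2: if `A_i` are
invertible `d × d` matrices and `σ_i σ_iᵀ ⪰ λ I`, then the Malliavin-type
matrix `M = (1/j) Σ_i (A_i σ_i)(A_i σ_i)ᵀ` is invertible and
`‖M⁻¹‖^p ≤ λ^{-p} (1/j) Σ_i ‖A_i⁻¹‖^{2p}`. -/
theorem stmt_19 (d j : ℕ) (hd : 1 ≤ d) (hj : 1 ≤ j) (p lam : ℝ)
    (hp : 1 ≤ p) (hlam : 0 < lam)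
    (A s : Fin j → Matrix (Fin d) (Fin d) ℝ)
    (hA : ∀ i, IsUnit (A i))
    (hs : ∀ i, Matrix.PosSemidef (s i * (s i)ᵀ - lam • (1 : Matrix (Fin d) (Fin d) ℝ))) :
    IsUnit ((j : ℝ)⁻¹ • ∑ i, (A i * s i) * (A i * s i)ᵀ) ∧
    opNorm (((j : ℝ)⁻¹ • ∑ i, (A i * s i) * (A i * s i)ᵀ)⁻¹) ^ p
      ≤ lam ^ (-p) * ((j : ℝ)⁻¹ * ∑ i, opNorm ((A i)⁻¹) ^ (2 * p)) := by
  haveI : Nonempty (Fin d) := ⟨⟨0, hd⟩⟩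
  haveI : Nonempty (Fin j) := ⟨⟨0, hj⟩⟩
  have hjpos : (0 : ℝ) < j := by exact_mod_cast hj
  set a : Fin j → ℝ := fun i => opNorm ((A i)⁻¹) with hadef
  have hapos : ∀ i, 0 < a i := by
    intro i
    apply opNorm_pos
    intro h0
    have h1 : (A i)⁻¹ * A i = 1 :=
      Matrix.nonsing_inv_mul _ ((Matrix.isUnit_iff_isUnit_det _).1 (hA i))
    rw [h0, zero_mul] at h1
    have h2 := congrFun (congrFun h1 ⟨0, hd⟩) ⟨0, hd⟩
    simp [Matrix.one_apply_eq] at h2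
  set h : ℝ := (j : ℝ)⁻¹ * ∑ i, (a i ^ 2)⁻¹ with hh
  have hhpos : 0 < h := by
    apply mul_pos (inv_pos.2 hjpos)
    exact Finset.sum_pos (fun i _ => inv_pos.2 (by have := hapos i; positivity))
      Finset.univ_nonempty
  set μ : ℝ := lam * h with hμdef
  have hμ : 0 < μ := mul_pos hlam hhpos
  have hquad : ∀ x : Fin d → ℝ,
      μ * (x ⬝ᵥ x) ≤ x ⬝ᵥ (((j : ℝ)⁻¹ • ∑ i, (A i * s i) * (A i * s i)ᵀ) *ᵥ x) := by
    intro x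
    rw [Matrix.smul_mulVec, dotProduct_smul, sum_mulVec', dot_sum',
      smul_eq_mul]
    have heq : μ * (x ⬝ᵥ x) = (j : ℝ)⁻¹ * ∑ i, lam * (a i ^ 2)⁻¹ * (x ⬝ᵥ x) := by
      have e1 : ∑ i, lam * (a i ^ 2)⁻¹ * (x ⬝ᵥ x) =
          (∑ i, (a i ^ 2)⁻¹) * (lam * (x ⬝ᵥ x)) := by
        rw [Finset.sum_mul]
        apply Finset.sum_congr rfl
        intros; ring
      rw [e1, hμdef, hh]; ring
    rw [heq]
    apply mul_le_mul_of_nonneg_left _ (inv_nonneg.2 hjpos.le)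
    exact Finset.sum_le_sum fun i _ =>
      step_bound lam (A i) (s i) (hA i) hlam (hapos i) (hs i) x
  obtain ⟨hunit, hbound⟩ := coercive_bound _ μ hμ hquad
  refine ⟨hunit, ?_⟩
  have hp0 : 0 ≤ p := le_trans zero_le_one hp
  calc opNorm (((j : ℝ)⁻¹ • ∑ i, (A i * s i) * (A i * s i)ᵀ)⁻¹) ^ p
      ≤ (μ⁻¹) ^ p := Real.rpow_le_rpow (norm_nonneg _) hbound hp0
    _ = lam ^ (-p) * (h⁻¹) ^ p := by
        rw [hμdef, mul_inv, Real.mul_rpow (by positivity) (by positivity),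
          Real.inv_rpow hlam.le, ← Real.rpow_neg hlam.le]
    _ ≤ lam ^ (-p) * ((j : ℝ)⁻¹ * ∑ i, (a i ^ 2) ^ p) := by
        apply mul_le_mul_of_nonneg_left _ (Real.rpow_nonneg hlam.le _)
        exact mean_ineq hj hp (fun i => a i ^ 2) (fun i => by have := hapos i; positivity)
    _ = lam ^ (-p) * ((j : ℝ)⁻¹ * ∑ i, opNorm ((A i)⁻¹) ^ (2 * p)) := by
        congr 1
        congr 1
        apply Finset.sum_congr rfl
        intro i _
        rw [← Real.rpow_natCast (a i) 2, ← Real.rpow_mul (hapos i).le]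
        norm_num
        rfl
end
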